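/- arXiv:1107.4902 — 7 statements merged into one kernel-verified Lean document; each statement's English description precedes it below -/
import Mathlib

section
/- Let G be a finite connected simple graph, let r be a vertex of G, and let C be a pebbling configuration on G. If the weighted sum ∑_{v ∈ V(G)} C(v) · 2^{−dist(v,r)} < 1 (where dist denotes graph distance), then no finite sequence of pebbling moves starting from C results in a configuration with at least one pebble on r; in particular C is unsolvable. -/
open Finset

/-- A single pebbling move on `G`: remove two pebbles from a vertex `u` with at least
two pebbles and add one pebble to a vertex `v` adjacent to `u`. -/
def PebblingMove {V : Type*} [DecidableEq V] (G : SimpleGraph V) (C C' : V → ℕ) : Prop :=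
  ∃ u v : V, G.Adj u v ∧ 2 ≤ C u ∧
    C' = fun w => if w = u then C u - 2 else if w = v then C v + 1 else C w

/-- A configuration is solvable if every vertex can receive a pebble after finitely
many pebbling moves. -/
def Solvable {V : Type*} [DecidableEq V] (G : SimpleGraph V) (C : V → ℕ) : Prop :=
  ∀ v : V, ∃ C' : V → ℕ, Relation.ReflTransGen (PebblingMove G) C C' ∧ 1 ≤ C' v

/-- The pebbling number `π(G)`: the least `t` such that every configuration of size `t`
is solvable. -/
noncomputable def pebblingNumber {V : Type*} [Fintype V] [DecidableEq V]
    (G : SimpleGraph V) : ℕ :=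
  sInf {t : ℕ | ∀ C : V → ℕ, (∑ v, C v) = t → Solvable G C}

/-- The finset of all configurations of `t` pebbles on `n` vertices. -/
def configs (n t : ℕ) : Finset (Fin n → ℕ) :=
  (Fintype.piFinset fun _ : Fin n => Finset.range (t + 1)).filter fun C => ∑ i, C i = t

open scoped Classical in
/-- `P(G; t)`: the proportion of solvable configurations among all `C(n+t-1, t)`
configurations of size `t`. -/
noncomputable def solvableProportion (n : ℕ) (G : SimpleGraph (Fin n)) (t : ℕ) : ℝ :=
  (((configs n t).filter fun C => Solvable G C).card : ℝ) / (Nat.choose (n + t - 1) t : ℝ)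

/-- `τ_α(G)`: the least `t` with `P(G;t) ≥ α`. -/
noncomputable def tauAlpha (n : ℕ) (G : SimpleGraph (Fin n)) (α : ℝ) : ℕ :=
  sInf {t : ℕ | α ≤ solvableProportion n G t}

/-- A path on vertices `0, …, L-1` whose endpoint `L-1` is joined by an edge to vertex
`L` of the clique on vertices `L, …, n-1`. -/
def pathClique (n L : ℕ) : SimpleGraph (Fin n) :=
  SimpleGraph.fromRel fun i j =>
    (j.val = i.val + 1 ∧ j.val ≤ L) ∨ (L ≤ i.val ∧ L ≤ j.val)

/-- `G_n`: a path with `⌊log₂ n⌋` vertices attached to a clique on the remaining vertices. -/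
def Ggraph (n : ℕ) : SimpleGraph (Fin n) := pathClique n (Nat.log 2 n)

/-- Two disjoint paths on `0, …, L-1` and `L, …, 2L-1`, whose endpoints `L-1` and `2L-1`
are each joined by an edge to vertex `2L` of the clique on vertices `2L, …, n-1`. -/
def twoPathClique (n L : ℕ) : SimpleGraph (Fin n) :=
  SimpleGraph.fromRel fun i j =>
    (j.val = i.val + 1 ∧ j.val < L) ∨
    (L ≤ i.val ∧ j.val = i.val + 1 ∧ j.val < 2 * L) ∨
    (2 * L ≤ i.val ∧ 2 * L ≤ j.val) ∨
    (i.val + 1 = L ∧ j.val = 2 * L) ∨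
    (i.val + 1 = 2 * L ∧ j.val = 2 * L)

/-- `L' = ⌊(1/2)·log₂ n + m⌋`. -/
noncomputable def Lp (n m : ℕ) : ℕ := ⌊Real.logb 2 n / 2 + m⌋₊

/-- `H_n` with parameter `m`: two paths with `L'` vertices each, attached to a clique on
the remaining `n - 2L'` vertices. -/
noncomputable def Hgraph (n m : ℕ) : SimpleGraph (Fin n) := twoPathClique n (Lp n m)

/-- If the weighted sum `∑_v C(v)·2^{-dist(v,r)}` is less than `1`, then
no sequence of pebbling moves starting from `C` puts a pebble on `r`; in particular `C`
is unsolvable. -/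
theorem weight_lt_one_unsolvable {V : Type*} [Fintype V] [DecidableEq V]
    (G : SimpleGraph V) (hG : G.Connected) (r : V) (C : V → ℕ)
    (h : ∑ v : V, (C v : ℝ) * (2 : ℝ) ^ (-(G.dist v r : ℤ)) < 1) :
    (∀ C' : V → ℕ, Relation.ReflTransGen (PebblingMove G) C C' → ¬ 1 ≤ C' r) ∧
      ¬ Solvable G C := by
  set w : V → ℝ := fun v => (2 : ℝ) ^ (-(G.dist v r : ℤ)) with hw
  have hwpos : ∀ v, 0 < w v := fun v => zpow_pos (by norm_num) _
  have key : ∀ C' : V → ℕ, Relation.ReflTransGen (PebblingMove G) C C' →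
      ∑ v, (C' v : ℝ) * w v ≤ ∑ v, (C v : ℝ) * w v := by
    intro C' h'
    induction h' with
    | refl => exact le_refl _
    | @tail B D hab hbc ih =>
      refine le_trans ?_ ih
      obtain ⟨u, v, hadj, h2, rfl⟩ := hbc
      have huv : u ≠ v := hadj.ne
      have hdist : (G.dist u r : ℤ) ≤ 1 + G.dist v r := by
        have := hG.dist_triangle (u := u) (v := v) (w := r)
        have h1 : G.dist u v = 1 := SimpleGraph.dist_eq_one_iff_adj.mpr hadj
        omega
      have hwv : w v ≤ 2 * w u := by
        have : w v ≤ (2 : ℝ) ^ (1 - (G.dist u r : ℤ)) := by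
          apply zpow_le_zpow_right₀ (by norm_num)
          omega
        calc w v ≤ (2 : ℝ) ^ (1 - (G.dist u r : ℤ)) := this
          _ = 2 * w u := by rw [zpow_sub₀ (by norm_num), zpow_one, hw]; simp only [zpow_neg, zpow_natCast]; ring
      have heach : ∀ x, ((if x = u then B u - 2 else if x = v then B v + 1 else B x : ℕ) : ℝ) * w x
          = (B x : ℝ) * w x + (if x = u then -2 * w u else if x = v then w v else 0) := by
        intro x
        by_cases hx : x = u
        · subst hx
          have : ((B x - 2 : ℕ) : ℝ) = (B x : ℝ) - 2 := by
            have := h2; push_cast [Nat.cast_sub h2]; ring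
          simp [this]; ring
        · by_cases hx' : x = v
          · subst hx'; simp [hx]; ring
          · simp [hx, hx']
      rw [Finset.sum_congr rfl (fun x _ => heach x), Finset.sum_add_distrib]
      have hsum : ∑ x : V, (if x = u then -2 * w u else if x = v then w v else 0) = -2 * w u + w v := by
        have hfn : ∀ x : V, (if x = u then -2 * w u else if x = v then w v else 0)
            = (if x = u then -2 * w u else 0) + (if x = v then w v else 0) := by
          intro x
          by_cases hx : x = u
          · subst hx; simp [huv]
          · by_cases hx' : x = v
            · subst hx'; simp [hx]
            · simp [hx, hx']
        rw [Finset.sum_congr rfl (fun x _ => hfn x), Finset.sum_add_distrib,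
          Finset.sum_ite_eq' Finset.univ u, Finset.sum_ite_eq' Finset.univ v]
        simp
      rw [hsum]
      have h0 : ∀ x ∈ Finset.univ, (0:ℝ) ≤ (B x : ℝ) * w x := fun x _ =>
        mul_nonneg (by positivity) (hwpos x).le
      linarith
  have main : ∀ C' : V → ℕ, Relation.ReflTransGen (PebblingMove G) C C' → ¬ 1 ≤ C' r := by
    intro C' hrt hr
    have hle := key C' hrt
    have hterm : (1 : ℝ) ≤ ∑ v, (C' v : ℝ) * w v := by
      have h1 : (1 : ℝ) ≤ (C' r : ℝ) * w r := by
        have hwr : w r = 1 := by simp [hw, SimpleGraph.dist_self]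
        rw [hwr, mul_one]; exact_mod_cast hr
      refine le_trans h1 (Finset.single_le_sum (f := fun v => (C' v : ℝ) * w v)
        (fun i _ => mul_nonneg (by positivity) (hwpos i).le) (Finset.mem_univ r))
    linarith
  exact ⟨main, fun hs => by obtain ⟨C', hrt, hr⟩ := hs r; exact main C' hrt hr⟩
end

section
/- For all sufficiently large n, the pebbling number of G_n satisfies π(G_n) ≤ 3n. -/
open Finset

lemma transfer {V : Type*} [DecidableEq V] (G : SimpleGraph V) :
    ∀ (k : ℕ) (C : V → ℕ) (u v : V), G.Adj u v → 2 * k ≤ C u →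
    ∃ C', Relation.ReflTransGen (PebblingMove G) C C' ∧
      C' u = C u - 2 * k ∧ C' v = C v + k ∧ ∀ y, y ≠ u → y ≠ v → C' y = C y := by
  intro k
  induction k with
  | zero => exact fun C u v _ _ => ⟨C, Relation.ReflTransGen.refl, by omega, by omega,
      fun y _ _ => rfl⟩
  | succ k ih =>
    intro C u v hadj hle
    have hne : u ≠ v := hadj.ne
    set C₁ : V → ℕ := fun w => if w = u then C u - 2 else if w = v then C v + 1 else C w
      with hC₁
    have hmv : PebblingMove G C C₁ := ⟨u, v, hadj, by omega, rfl⟩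
    have hC₁u : C₁ u = C u - 2 := by simp [hC₁]
    have hC₁v : C₁ v = C v + 1 := by simp [hC₁, hne.symm]
    obtain ⟨C', hr, h1, h2, h3⟩ := ih C₁ u v hadj (by omega)
    refine ⟨C', Relation.ReflTransGen.head hmv hr, by omega, by omega, fun y hyu hyv => ?_⟩
    rw [h3 y hyu hyv]; simp [hC₁, hyu, hyv]


lemma collect {V : Type*} [DecidableEq V] (G : SimpleGraph V) (h : V) :
    ∀ (s : Finset V), h ∉ s → (∀ x ∈ s, G.Adj x h) → ∀ C : V → ℕ,
    ∃ C', Relation.ReflTransGen (PebblingMove G) C C' ∧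
      C' h = C h + ∑ x ∈ s, C x / 2 ∧ ∀ y, y ∉ s → y ≠ h → C' y = C y := by
  intro s
  induction s using Finset.induction_on with
  | empty => exact fun _ _ C => ⟨C, Relation.ReflTransGen.refl, by simp, fun y _ _ => rfl⟩
  | @insert a s ha ih =>
    intro hh hadj C
    have hha : h ≠ a := fun e => hh (by simp [e])
    have h2 : 2 * (C a / 2) ≤ C a := by omega
    obtain ⟨C₁, hr1, e1, e2, e3⟩ := transfer G (C a / 2) C a h
      (hadj a (by simp)) h2
    obtain ⟨C', hr2, f1, f3⟩ := ih (fun e => hh (by simp [e])) 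
      (fun x hx => hadj x (by simp [hx])) C₁
    refine ⟨C', hr1.trans hr2, ?_, fun y hy hyh => ?_⟩
    · rw [f1, e2, Finset.sum_insert ha]
      have : ∀ x ∈ s, C₁ x = C x := fun x hx =>
        e3 x (fun e => ha (e ▸ hx)) (fun e => hh (by simp [e ▸ hx]))
      rw [Finset.sum_congr rfl fun x hx => by rw [this x hx]]
      ring
    · rw [f3 y (fun hys => hy (by simp [hys])) hyh,
        e3 y (fun e => hy (by simp [e])) hyh]


lemma chainGreedy {V : Type*} [DecidableEq V] (G : SimpleGraph V) :
    ∀ (d : ℕ) (w : ℕ → V) (C : V → ℕ),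
    (∀ i, i < d → G.Adj (w (i + 1)) (w i)) →
    (∀ i k, i ≤ d → k ≤ d → w i = w k → i = k) →
    ∃ C', Relation.ReflTransGen (PebblingMove G) C C' ∧
      (∑ i ∈ Finset.range (d + 1), C (w i) * 2 ^ (d - i)) / 2 ^ d ≤ C' (w 0) := by
  intro d
  induction d with
  | zero => exact fun w C _ _ => ⟨C, Relation.ReflTransGen.refl, by simp⟩
  | succ d ih =>
    intro w C hadj hinj
    have hadj' : G.Adj (w (d + 1)) (w d) := hadj d (by omega)
    have hk : 2 * (C (w (d + 1)) / 2) ≤ C (w (d + 1)) := by omega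
    obtain ⟨C₁, hr1, e1, e2, e3⟩ := transfer G (C (w (d + 1)) / 2) C (w (d + 1)) (w d)
      hadj' hk
    obtain ⟨C', hr2, hle⟩ := ih w C₁ (fun i hi => hadj i (by omega))
      (fun i k hi hk' => hinj i k (by omega) (by omega))
    refine ⟨C', hr1.trans hr2, le_trans ?_ hle⟩
    -- arithmetic
    have hC₁eq : ∀ i, i < d → C₁ (w i) = C (w i) := by
      intro i hi
      refine e3 (w i) (fun e => ?_) (fun e => ?_)
      · have := hinj i (d + 1) (by omega) (by omega) e; omega
      · have := hinj i d (by omega) (by omega) e; omega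
    set k := C (w (d + 1)) / 2 with hkdef
    have hrem : C (w (d + 1)) = 2 * k + C (w (d + 1)) % 2 := by omega
    -- S = sum over range (d+2) with exponent d+1-i ; S₁ = sum over range (d+1) w.r.t. C₁
    set S : ℕ := ∑ i ∈ Finset.range (d + 1 + 1), C (w i) * 2 ^ (d + 1 - i) with hS
    set T : ℕ := ∑ i ∈ Finset.range (d + 1), C (w i) * 2 ^ (d - i) with hT
    set S₁ : ℕ := ∑ i ∈ Finset.range (d + 1), C₁ (w i) * 2 ^ (d - i) with hS₁
    have hTS₁ : S₁ = T + k := by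
      rw [hS₁, hT, Finset.sum_range_succ, Finset.sum_range_succ,
        Finset.sum_congr rfl (fun i hi => by
          rw [hC₁eq i (Finset.mem_range.mp hi)]), e2, Nat.sub_self, pow_zero]
      ring
    have hST : S = 2 * T + C (w (d + 1)) := by
      rw [hS, Finset.sum_range_succ]
      have hcg : ∀ i ∈ Finset.range (d + 1),
          C (w i) * 2 ^ (d + 1 - i) = 2 * (C (w i) * 2 ^ (d - i)) := by
        intro i hi
        have hi' : i < d + 1 := Finset.mem_range.mp hi
        have he : d + 1 - i = (d - i) + 1 := by omega
        rw [he, pow_succ]; ring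
      rw [Finset.sum_congr rfl hcg, ← Finset.mul_sum, ← hT]
      simp
    have hdiv2 : S / 2 = S₁ := by omega
    calc S / 2 ^ (d + 1) = S / 2 / 2 ^ d := by
            rw [pow_succ, mul_comm, ← Nat.div_div_eq_div_mul]
      _ = S₁ / 2 ^ d := by rw [hdiv2]
      _ ≤ S₁ / 2 ^ d := le_rfl

lemma pathClique_adj_succ {n L k : ℕ} (h1 : k + 1 ≤ L) (h2 : k + 1 < n) :
    (pathClique n L).Adj ⟨k + 1, h2⟩ ⟨k, by omega⟩ := by
  rw [pathClique, SimpleGraph.fromRel_adj]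
  exact ⟨by simp [Fin.ext_iff], Or.inr (Or.inl ⟨rfl, h1⟩)⟩


lemma pathClique_adj_clique {n L : ℕ} {a b : Fin n} (ha : L ≤ a.val) (hb : L ≤ b.val)
    (hab : a ≠ b) : (pathClique n L).Adj a b := by
  rw [pathClique, SimpleGraph.fromRel_adj]
  exact ⟨hab, Or.inl (Or.inr ⟨ha, hb⟩)⟩


lemma filter_sum_eq {n : ℕ} (C : Fin n → ℕ) (a : ℕ) (han : a ≤ n) :
    ∑ x ∈ Finset.univ.filter (fun x : Fin n => a ≤ x.val), C x
      = ∑ k ∈ Finset.Ico a n, (if h : k < n then C ⟨k, h⟩ else 0) := by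
  set D : ℕ → ℕ := fun k => if h : k < n then C ⟨k, h⟩ else 0 with hD
  set E : ℕ → ℕ := fun k => if a ≤ k then D k else 0 with hE
  have h1 : ∑ x ∈ Finset.univ.filter (fun x : Fin n => a ≤ x.val), C x
      = ∑ x : Fin n, E x.val := by
    rw [Finset.sum_filter]
    refine Finset.sum_congr rfl fun x _ => ?_
    by_cases hx : a ≤ x.val <;> simp [hE, hD, hx]
  rw [h1, Fin.sum_univ_eq_sum_range E n, Finset.range_eq_Ico,
    ← Finset.sum_Ico_consecutive E (Nat.zero_le a) han]
  have h2 : ∑ k ∈ Finset.Ico 0 a, E k = 0 :=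
    Finset.sum_eq_zero fun k hk => by
      have := (Finset.mem_Ico.mp hk).2
      simp only [hE]
      rw [if_neg (by omega)]
  have h3 : ∑ k ∈ Finset.Ico a n, E k = ∑ k ∈ Finset.Ico a n, D k :=
    Finset.sum_congr rfl fun k hk => by
      have := (Finset.mem_Ico.mp hk).1
      simp [hE, this]
  rw [h2, h3, zero_add]

lemma pathClique_adj_path {n L : ℕ} {a b : Fin n} (hab : b.val = a.val + 1)
    (hbL : b.val ≤ L) : (pathClique n L).Adj b a := by
  rw [pathClique, SimpleGraph.fromRel_adj]
  exact ⟨by intro e; subst e; omega, Or.inr (Or.inl ⟨hab, hbL⟩)⟩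


/-- For all sufficiently large `n`, `π(G_n) ≤ 3n`. -/
theorem pebblingNumber_Ggraph_le : ∃ N : ℕ, ∀ n : ℕ, N ≤ n →
    pebblingNumber (Ggraph n) ≤ 3 * n := by
  refine ⟨16, fun n hn => ?_⟩
  have hn0 : 0 < n := by omega
  set L := Nat.log 2 n with hLdef
  have hpow : 2 ^ L ≤ n := Nat.pow_log_le_self 2 (by omega)
  have hLn : L < n := lt_of_lt_of_le ((Nat.lt_two_pow_self (n := L))) hpow
  have hGg : Ggraph n = pathClique n L := rfl
  apply Nat.sInf_le
  show ∀ C : Fin n → ℕ, (∑ v, C v) = 3 * n → _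
  intro C hC v
  rw [hGg]
  set D : ℕ → ℕ := fun k => if h : k < n then C ⟨k, h⟩ else 0 with hD
  have hDval : ∀ (k : ℕ) (h : k < n), D k = C ⟨k, h⟩ := fun k h => dif_pos h
  have htotal : ∑ k ∈ Finset.range n, D k = 3 * n := by
    rw [← Fin.sum_univ_eq_sum_range D n, ← hC]
    exact Finset.sum_congr rfl fun i _ => by rw [hDval i.val i.isLt]
  set j := v.val with hjdef
  have hjn : j < n := v.isLt
  rcases lt_or_ge j L with hjL | hjL
  · -- target on the path
    by_cases hcase : 2 ^ j ≤ ∑ k ∈ Finset.range j, D k * 2 ^ k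
    · -- enough weight below: upward chain
      set w : ℕ → Fin n := fun i => ⟨(j - i) % n, Nat.mod_lt _ hn0⟩ with hwdef
      have hw : ∀ i, (w i).val = j - i := fun i => Nat.mod_eq_of_lt (by omega)
      have hadj : ∀ i, i < j → (pathClique n L).Adj (w (i + 1)) (w i) := by
        intro i hi
        exact (pathClique_adj_path (a := w (i + 1)) (b := w i)
          (by rw [hw, hw]; omega) (by rw [hw]; omega)).symm
      have hinj : ∀ i k, i ≤ j → k ≤ j → w i = w k → i = k := by
        intro i k hi hk e
        have : (w i).val = (w k).val := by rw [e]
        rw [hw, hw] at this; omega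
      obtain ⟨C', hr, hle⟩ := chainGreedy (pathClique n L) j w C hadj hinj
      have hWeq : ∑ i ∈ Finset.range (j + 1), C (w i) * 2 ^ (j - i)
          = ∑ k ∈ Finset.range (j + 1), D k * 2 ^ k := by
        rw [← Finset.sum_range_reflect (fun k => D k * 2 ^ k) (j + 1)]
        refine Finset.sum_congr rfl fun i hi => ?_
        have hi' : i < j + 1 := Finset.mem_range.mp hi
        have e1 : j + 1 - 1 - i = j - i := by omega
        have e2 : C (w i) = D (j - i) := by
          rw [hDval (j - i) (by omega)]
          congr 1
          exact Fin.ext (hw i)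
        rw [e1, e2]
      have hW : 2 ^ j ≤ ∑ i ∈ Finset.range (j + 1), C (w i) * 2 ^ (j - i) := by
        rw [hWeq, Finset.sum_range_succ]
        omega
      have hw0 : w 0 = v := Fin.ext (by rw [hw]; omega)
      refine ⟨C', hr, ?_⟩
      rw [← hw0]
      exact le_trans ((Nat.one_le_div_iff (Nat.pow_pos (n := j) (by omega))).mpr hW) hle
    · -- not enough weight below: collect clique into the hub, then down the path
      have hP1 : ∑ k ∈ Finset.range j, D k < 2 ^ j := by
        have : ∑ k ∈ Finset.range j, D k ≤ ∑ k ∈ Finset.range j, D k * 2 ^ k :=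
          Finset.sum_le_sum fun k _ => Nat.le_mul_of_pos_right _ (Nat.pow_pos (n := k) (by omega))
        omega
      set hub : Fin n := ⟨L, hLn⟩ with hhubdef
      set s : Finset (Fin n) := Finset.univ.filter (fun x : Fin n => L + 1 ≤ x.val)
        with hsdef
      have hhubs : hub ∉ s := by simp [hsdef, hhubdef]
      have hadjs : ∀ x ∈ s, (pathClique n L).Adj x hub := by
        intro x hx
        have hx' : L + 1 ≤ x.val := by simpa [hsdef] using hx
        exact pathClique_adj_clique (by omega) (by simp [hhubdef]) (by
          intro e
          have : x.val = L := by rw [e, hhubdef]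
          omega)
      obtain ⟨C₁, hr1, hhub, hoff⟩ := collect (pathClique n L) hub s hhubs hadjs C
      set X : ℕ := ∑ x ∈ s, C x / 2 with hXdef
      set d : ℕ := L - j with hddef
      have hd1 : 1 ≤ d := by omega
      set w : ℕ → Fin n := fun i => ⟨(j + i) % n, Nat.mod_lt _ hn0⟩ with hwdef
      have hw : ∀ i, i ≤ d → (w i).val = j + i := fun i hi =>
        Nat.mod_eq_of_lt (by omega)
      have hadj : ∀ i, i < d → (pathClique n L).Adj (w (i + 1)) (w i) := by
        intro i hi
        exact pathClique_adj_path (a := w i) (b := w (i + 1))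
          (by rw [hw i (by omega), hw (i + 1) (by omega)]; omega)
          (by rw [hw (i + 1) (by omega)]; omega)
      have hinj : ∀ i k, i ≤ d → k ≤ d → w i = w k → i = k := by
        intro i k hi hk e
        have : (w i).val = (w k).val := by rw [e]
        rw [hw i hi, hw k hk] at this; omega
      obtain ⟨C', hr2, hle⟩ := chainGreedy (pathClique n L) d w C₁ hadj hinj
      -- identify the pieces
      set P1 : ℕ := ∑ k ∈ Finset.range j, D k with hP1def
      set P2 : ℕ := ∑ k ∈ Finset.Ico j L, D k with hP2def
      set So : ℕ := ∑ k ∈ Finset.Ico (L + 1) n, D k with hSodef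
      have htot : P1 + P2 + D L + So = 3 * n := by
        have t1 := Finset.sum_Ico_consecutive D (Nat.zero_le j) (le_of_lt hjL)
        have t3 := Finset.sum_Ico_consecutive D (Nat.zero_le (L + 1)) hLn
        have tL : ∑ k ∈ Finset.Ico L (L + 1), D k = D L := by
          rw [Finset.sum_Ico_succ_top (le_refl L), Finset.Ico_self, Finset.sum_empty,
            zero_add]
        have t2 := Finset.sum_Ico_consecutive D (Nat.zero_le L) (by omega : L ≤ L + 1)
        simp only [← Finset.range_eq_Ico] at t1 t2 t3
        omega
      have hSo : So = ∑ x ∈ s, C x := by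
        rw [hSodef, hD]
        exact (filter_sum_eq C (L + 1) hLn).symm
      have hXSo : So ≤ 2 * X + n := by
        have h1 : ∑ x ∈ s, C x ≤ ∑ x ∈ s, (2 * (C x / 2) + 1) :=
          Finset.sum_le_sum fun x _ => by omega
        have h2 : ∑ x ∈ s, (2 * (C x / 2) + 1) = 2 * X + s.card := by
          rw [Finset.sum_add_distrib, Finset.sum_const, smul_eq_mul, mul_one,
            hXdef, Finset.mul_sum]
        have h3 : s.card ≤ n := le_trans (Finset.card_filter_le _ _) (by simp)
        omega
      -- lower bound on the weighted sum
      have hterm : ∀ i ∈ Finset.range d, 2 * D (j + i) ≤ C₁ (w i) * 2 ^ (d - i) := by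
        intro i hi
        have hi' : i < d := Finset.mem_range.mp hi
        have hwival : (w i).val = j + i := hw i (by omega)
        have e1 : C₁ (w i) = D (j + i) := by
          have m1 : w i ∉ s := by
            intro hmem
            rw [hsdef] at hmem
            have := (Finset.mem_filter.mp hmem).2
            omega
          have m2 : w i ≠ hub := by
            intro e
            have : (w i).val = L := by rw [e, hhubdef]
            omega
          rw [hoff (w i) m1 m2, hDval (j + i) (by omega)]
          congr 1
          exact Fin.ext hwival
        have e2 : 2 ≤ 2 ^ (d - i) := by
          calc 2 = 2 ^ 1 := rfl
          _ ≤ 2 ^ (d - i) := Nat.pow_le_pow_right (by omega) (by omega)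
        rw [e1]
        calc 2 * D (j + i) = D (j + i) * 2 := by ring
        _ ≤ D (j + i) * 2 ^ (d - i) := Nat.mul_le_mul_left _ e2
      have hhubval : C₁ (w d) = D L + X := by
        have e : w d = hub := Fin.ext (by
          rw [hw d (le_refl d)]
          show j + d = L
          omega)
        rw [e, hhub, hDval L hLn]
      have hWlow : 2 * P2 + (D L + X) ≤ ∑ i ∈ Finset.range (d + 1), C₁ (w i) * 2 ^ (d - i) := by
        rw [Finset.sum_range_succ, hhubval, Nat.sub_self, pow_zero, mul_one]
        have h1 : 2 * P2 ≤ ∑ i ∈ Finset.range d, C₁ (w i) * 2 ^ (d - i) := by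
          have : P2 = ∑ i ∈ Finset.range d, D (j + i) := by
            rw [hP2def, Finset.sum_Ico_eq_sum_range]
          rw [this, Finset.mul_sum]
          exact Finset.sum_le_sum hterm
        omega
      -- the key counting inequality
      have hW : 2 ^ d ≤ ∑ i ∈ Finset.range (d + 1), C₁ (w i) * 2 ^ (d - i) := by
        have hab : 2 ^ j * 2 ^ d = 2 ^ L := by
          rw [← pow_add]; congr 1; omega
        rcases Nat.eq_zero_or_pos j with hj0 | hj0
        · have hb : 2 ^ d ≤ n := by
            rw [hddef, hj0, Nat.sub_zero]
            exact hpow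
          have hp10 : P1 = 0 := by rw [hP1def, hj0]; simp
          omega
        · have ha2 : 2 ≤ 2 ^ j := by
            calc 2 = 2 ^ 1 := rfl
            _ ≤ 2 ^ j := Nat.pow_le_pow_right (by omega) hj0
          have hb2 : 2 ≤ 2 ^ d := by
            calc 2 = 2 ^ 1 := rfl
            _ ≤ 2 ^ d := Nat.pow_le_pow_right (by omega) hd1
          have hA : 2 * 2 ^ j ≤ n := by
            have : 2 ^ j * 2 ≤ 2 ^ j * 2 ^ d := Nat.mul_le_mul_left _ hb2
            omega
          have hB : 2 * 2 ^ d ≤ n := by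
            have : 2 * 2 ^ d ≤ 2 ^ j * 2 ^ d := Nat.mul_le_mul_right _ ha2
            omega
          omega
      have hw0 : w 0 = v := Fin.ext (by rw [hw 0 (by omega)]; omega)
      refine ⟨C', hr1.trans hr2, ?_⟩
      rw [← hw0]
      exact le_trans ((Nat.one_le_div_iff (Nat.pow_pos (n := d) (by omega))).mpr hW) hle
  · -- target in the clique
    by_cases hv1 : 1 ≤ C v
    · exact ⟨C, Relation.ReflTransGen.refl, hv1⟩
    by_cases hu : ∃ u : Fin n, L ≤ u.val ∧ u ≠ v ∧ 2 ≤ C u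
    · obtain ⟨u, hu1, hu2, hu3⟩ := hu
      set C₂ : Fin n → ℕ := fun w => if w = u then C u - 2 else if w = v then C v + 1
        else C w with hC₂
      have hmv : PebblingMove (pathClique n L) C C₂ :=
        ⟨u, v, pathClique_adj_clique hu1 hjL hu2, hu3, rfl⟩
      refine ⟨C₂, Relation.ReflTransGen.single hmv, ?_⟩
      have : C₂ v = C v + 1 := by simp [hC₂, hu2.symm]
      omega
    · -- all clique vertices have at most one pebble: the path is loaded
      push_neg at hu
      have hall : ∀ u : Fin n, L ≤ u.val → C u ≤ 1 := by
        intro u hLu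
        by_cases huv : u = v
        · rw [huv]; omega
        · have := hu u hLu huv; omega
      have hclique : ∑ x ∈ Finset.univ.filter (fun x : Fin n => L ≤ x.val), C x ≤ n := by
        calc ∑ x ∈ Finset.univ.filter (fun x : Fin n => L ≤ x.val), C x
            ≤ (Finset.univ.filter (fun x : Fin n => L ≤ x.val)).card • 1 :=
              Finset.sum_le_card_nsmul _ _ 1 fun x hx =>
                hall x (Finset.mem_filter.mp hx).2
          _ ≤ n := by
              rw [smul_eq_mul, mul_one]
              exact le_trans (Finset.card_filter_le _ _) (by simp)
      have hIcoL : ∑ k ∈ Finset.Ico L n, D k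
          = ∑ x ∈ Finset.univ.filter (fun x : Fin n => L ≤ x.val), C x := by
        rw [hD]
        exact (filter_sum_eq C L (le_of_lt hLn)).symm
      have hsplitLn : ∑ k ∈ Finset.range L, D k + ∑ k ∈ Finset.Ico L n, D k
          = 3 * n := by
        have t1 := Finset.sum_Ico_consecutive D (Nat.zero_le L) (le_of_lt hLn)
        simp only [← Finset.range_eq_Ico] at t1
        omega
      have hP2n : 2 * n ≤ ∑ k ∈ Finset.range L, D k := by omega
      -- greedy chain from v₀ up to the hub
      set hub : Fin n := ⟨L, hLn⟩ with hhubdef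
      set w : ℕ → Fin n := fun i => ⟨(L - i) % n, Nat.mod_lt _ hn0⟩ with hwdef
      have hw : ∀ i, (w i).val = L - i := fun i => Nat.mod_eq_of_lt (by omega)
      have hadj : ∀ i, i < L → (pathClique n L).Adj (w (i + 1)) (w i) := by
        intro i hi
        exact (pathClique_adj_path (a := w (i + 1)) (b := w i)
          (by rw [hw, hw]; omega) (by rw [hw]; omega)).symm
      have hinj : ∀ i k, i ≤ L → k ≤ L → w i = w k → i = k := by
        intro i k hi hk e
        have : (w i).val = (w k).val := by rw [e]
        rw [hw, hw] at this; omega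
      obtain ⟨C', hr, hle⟩ := chainGreedy (pathClique n L) L w C hadj hinj
      have hWeq : ∑ i ∈ Finset.range (L + 1), C (w i) * 2 ^ (L - i)
          = ∑ k ∈ Finset.range (L + 1), D k * 2 ^ k := by
        rw [← Finset.sum_range_reflect (fun k => D k * 2 ^ k) (L + 1)]
        refine Finset.sum_congr rfl fun i hi => ?_
        have hi' : i < L + 1 := Finset.mem_range.mp hi
        have e1 : L + 1 - 1 - i = L - i := by omega
        have e2 : C (w i) = D (L - i) := by
          rw [hDval (L - i) (by omega)]
          congr 1
          exact Fin.ext (hw i)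
        rw [e1, e2]
      have hW : 2 * 2 ^ L ≤ ∑ i ∈ Finset.range (L + 1), C (w i) * 2 ^ (L - i) := by
        rw [hWeq, Finset.sum_range_succ]
        have h1 : ∑ k ∈ Finset.range L, D k ≤ ∑ k ∈ Finset.range L, D k * 2 ^ k :=
          Finset.sum_le_sum fun k _ => Nat.le_mul_of_pos_right _ (Nat.pow_pos (n := k) (by omega))
        omega
      have hhub2 : 2 ≤ C' (w 0) := by
        refine le_trans ?_ hle
        rw [Nat.le_div_iff_mul_le (Nat.pow_pos (n := L) (by omega))]
        omega
      have hw0 : w 0 = hub := Fin.ext (by rw [hw]; show L - 0 = L; omega)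
      by_cases hveq : v = hub
      · exact ⟨C', hr, by rw [hveq, ← hw0]; omega⟩
      · set C₂ : Fin n → ℕ := fun y => if y = w 0 then C' (w 0) - 2
          else if y = v then C' v + 1 else C' y with hC₂
        have hne : w 0 ≠ v := by rw [hw0]; exact fun e => hveq e.symm
        have hmv : PebblingMove (pathClique n L) C' C₂ :=
          ⟨w 0, v, by
            rw [hw0]
            exact pathClique_adj_clique (by simp [hhubdef]) hjL fun e => hveq e.symm,
            hhub2, rfl⟩
        refine ⟨C₂, hr.tail hmv, ?_⟩
        have : C₂ v = C' v + 1 := by simp [hC₂, hne.symm]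
        omega
end

section
/- With parameter m = 1000, for all sufficiently large n the pebbling number of H_n satisfies π(H_n) ≥ 100n. -/
open Finset

lemma aux_pow (K : ℕ) (hK : 12 ≤ K) : 2*K + 2003 ≤ 2^K := by
  induction K, hK using Nat.le_induction with
  | base => norm_num
  | succ k hk ih =>
    have h2 : (2:ℕ)^(k+1) = 2*2^k := by ring
    omega

lemma move_many {V : Type*} [DecidableEq V] (G : SimpleGraph V) {u v : V} (h : G.Adj u v) :
    ∀ (a : ℕ) (C : V → ℕ), 2*a ≤ C u → ∃ C', Relation.ReflTransGen (PebblingMove G) C C' ∧ C v + a ≤ C' v := by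
  intro a
  induction a with
  | zero => intro C _; exact ⟨C, .refl, by omega⟩
  | succ a ih =>
    intro C hC
    have hne : u ≠ v := h.ne
    set C1 : V → ℕ := fun w => if w = u then C u - 2 else if w = v then C v + 1 else C w with hC1
    have hm : PebblingMove G C C1 := ⟨u, v, h, by omega, rfl⟩
    have h1u : C1 u = C u - 2 := by simp [hC1]
    have h1v : C1 v = C v + 1 := by simp only [hC1]; rw [if_neg (Ne.symm hne)]; simp
    obtain ⟨C', hC', hv⟩ := ih C1 (by omega)
    exact ⟨C', .head hm hC', by omega⟩

lemma walk_solve {V : Type*} [DecidableEq V] {G : SimpleGraph V} :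
    ∀ {u v : V} (p : G.Walk u v) (C : V → ℕ), 2^p.length ≤ C u →
      ∃ C', Relation.ReflTransGen (PebblingMove G) C C' ∧ 1 ≤ C' v := by
  intro u v p
  induction p with
  | nil => intro C hC; exact ⟨C, .refl, by simpa using hC⟩
  | @cons a b c h q ih =>
    intro C hC
    have hlen : (SimpleGraph.Walk.cons h q).length = q.length + 1 := rfl
    rw [hlen, pow_succ] at hC
    obtain ⟨C1, h1, hb⟩ := move_many G h (2^q.length) C (by omega)
    obtain ⟨C', h2, hv⟩ := ih C1 (by omega)
    exact ⟨C', h1.trans h2, hv⟩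

lemma weight_step {n : ℕ} {G : SimpleGraph (Fin n)} (w : Fin n → ℝ)
    (hw : ∀ u v : Fin n, G.Adj u v → w v ≤ 2 * w u) {C C' : Fin n → ℕ}
    (h : PebblingMove G C C') :
    ∑ x, (C' x : ℝ) * w x ≤ ∑ x, (C x : ℝ) * w x := by
  obtain ⟨u, v, huv, h2, rfl⟩ := h
  have hne : u ≠ v := huv.ne
  have key : ∀ x : Fin n, ((if x = u then C u - 2 else if x = v then C v + 1 else C x : ℕ) : ℝ) * w x
      = (C x : ℝ) * w x + ((if x = u then (-2) * w u else 0) + (if x = v then w v else 0)) := by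
    intro x
    by_cases hxu : x = u
    · subst hxu
      rw [if_pos rfl, if_pos rfl, if_neg hne, Nat.cast_sub h2]
      push_cast
      ring
    · by_cases hxv : x = v
      · subst hxv
        rw [if_neg hxu, if_pos rfl, if_neg hxu, if_pos rfl]
        push_cast
        ring
      · rw [if_neg hxu, if_neg hxv, if_neg hxu, if_neg hxv]
        ring
  rw [Finset.sum_congr rfl (fun x _ => key x), Finset.sum_add_distrib, Finset.sum_add_distrib,
    Finset.sum_ite_eq' Finset.univ u (fun _ => (-2) * w u),
    Finset.sum_ite_eq' Finset.univ v (fun _ => w v)]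
  have := hw u v huv
  simp only [Finset.mem_univ, if_true]
  linarith

lemma weight_mono {n : ℕ} {G : SimpleGraph (Fin n)} (w : Fin n → ℝ)
    (hw : ∀ u v : Fin n, G.Adj u v → w v ≤ 2 * w u) {C C' : Fin n → ℕ}
    (h : Relation.ReflTransGen (PebblingMove G) C C') :
    ∑ x, (C' x : ℝ) * w x ≤ ∑ x, (C x : ℝ) * w x := by
  induction h with
  | refl => exact le_refl _
  | tail _ step ih => exact le_trans (weight_step w hw step) ih

lemma unsolvable_of_weight {n : ℕ} {G : SimpleGraph (Fin n)} (w : Fin n → ℝ)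
    (hw0 : ∀ v, 0 ≤ w v) (hw : ∀ u v : Fin n, G.Adj u v → w v ≤ 2 * w u)
    (C : Fin n → ℕ) (g : Fin n) (hlt : ∑ x, (C x : ℝ) * w x < w g) : ¬ Solvable G C := by
  intro hs
  obtain ⟨C', hC', h1⟩ := hs g
  have hmono := weight_mono w hw hC'
  have hge : w g ≤ ∑ x, (C' x : ℝ) * w x := by
    calc w g ≤ (C' g : ℝ) * w g := le_mul_of_one_le_left (hw0 g) (by exact_mod_cast h1)
    _ ≤ ∑ x, (C' x : ℝ) * w x :=
        Finset.single_le_sum (f := fun x => (C' x : ℝ) * w x)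
          (fun x _ => mul_nonneg (Nat.cast_nonneg _) (hw0 x)) (Finset.mem_univ g)
  linarith

def fN (L i : ℕ) : ℕ := if i < L then 2*L - i else if i < 2*L then i - L else L

lemma fN_close {L a b : ℕ}
    (h : (b = a + 1 ∧ b < L) ∨ (L ≤ a ∧ b = a+1 ∧ b < 2*L) ∨ (2*L ≤ a ∧ 2*L ≤ b) ∨
      (a+1 = L ∧ b = 2*L) ∨ (a+1 = 2*L ∧ b = 2*L)) :
    fN L a ≤ fN L b + 1 ∧ fN L b ≤ fN L a + 1 := by
  unfold fN
  split_ifs <;> omega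

lemma reach_hub {n L : ℕ} (hL : 1 ≤ L) (h2L : 2*L < n) (i : Fin n) :
    (twoPathClique n L).Reachable i ⟨2*L, h2L⟩ := by
  have key : ∀ (d i : ℕ) (hi : i < n), 2*L ≤ i + d →
      (twoPathClique n L).Reachable ⟨i, hi⟩ ⟨2*L, h2L⟩ := by
    intro d
    induction d with
    | zero =>
      intro i hi hd
      simp only [Nat.add_zero] at hd
      rcases Nat.eq_or_lt_of_le hd with he | hlt
      · subst he; exact SimpleGraph.Reachable.refl _
      · apply SimpleGraph.Adj.reachable
        simp only [twoPathClique, SimpleGraph.fromRel_adj, ne_eq, Fin.mk.injEq, and_true, true_and]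
        omega
    | succ d ih =>
      intro i hi hd
      by_cases hcase : 2*L ≤ i
      · exact ih i hi (by omega)
      · push_neg at hcase
        rcases Nat.lt_or_ge i L with hiL | hiL
        · rcases Nat.eq_or_lt_of_le (Nat.succ_le_of_lt hiL) with he | hlt
          · -- i+1 = L : adjacent to hub
            apply SimpleGraph.Adj.reachable
            simp only [twoPathClique, SimpleGraph.fromRel_adj, ne_eq, Fin.mk.injEq, and_true, true_and]
            omega
          · -- i+1 < L
            have hadj : (twoPathClique n L).Adj ⟨i, hi⟩ ⟨i+1, by omega⟩ := by
              simp only [twoPathClique, SimpleGraph.fromRel_adj, ne_eq, Fin.mk.injEq, and_true, true_and]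
              omega
            exact hadj.reachable.trans (ih (i+1) (by omega) (by omega))
        · rcases Nat.eq_or_lt_of_le (Nat.succ_le_of_lt hcase) with he | hlt
          · apply SimpleGraph.Adj.reachable
            simp only [twoPathClique, SimpleGraph.fromRel_adj, ne_eq, Fin.mk.injEq, and_true, true_and]
            omega
          · have hadj : (twoPathClique n L).Adj ⟨i, hi⟩ ⟨i+1, by omega⟩ := by
              simp only [twoPathClique, SimpleGraph.fromRel_adj, ne_eq, Fin.mk.injEq, and_true, true_and]
              omega
            exact hadj.reachable.trans (ih (i+1) (by omega) (by omega))
  obtain ⟨i, hi⟩ := i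
  exact key (2*L) i hi (by omega)

set_option maxHeartbeats 1000000 in
/-- With `m = 1000`, for all sufficiently large `n`, `π(H_n) ≥ 100n`. -/
theorem pebblingNumber_Hgraph_ge : ∃ N : ℕ, ∀ n : ℕ, N ≤ n →
    100 * n ≤ pebblingNumber (Hgraph n 1000) := by
  refine ⟨4096, fun n hn => ?_⟩
  have hn0 : 0 < n := by omega
  set K := Nat.log 2 n with hKdef
  have hK12 : 12 ≤ K := by
    have h1 : (2:ℕ)^12 ≤ n := by norm_num; omega
    exact (Nat.le_log_iff_pow_le (by norm_num) (by omega)).mpr h1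
  set L := Lp n 1000 with hLdef
  have hcastK : (K:ℝ) ≤ Real.logb 2 n := Real.natLog_le_logb n 2
  have hlogb_lt : Real.logb 2 n < (K:ℝ) + 1 := by
    have h1 : (n:ℝ) < 2^(K+1) := by exact_mod_cast Nat.lt_pow_succ_log_self (by norm_num) n
    have h2 : Real.logb 2 (n:ℝ) < Real.logb 2 ((2:ℝ)^(K+1)) :=
      Real.logb_lt_logb (by norm_num) (by exact_mod_cast hn0) h1
    rwa [Real.logb_pow, Real.logb_self_eq_one (by norm_num), mul_one,
      Nat.cast_add, Nat.cast_one] at h2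
  have hL_lb : K/2 + 1000 ≤ L := by
    rw [hLdef, Lp]
    apply Nat.le_floor
    have h1 : ((K/2 : ℕ) : ℝ) ≤ (K:ℝ)/2 := Nat.cast_div_le
    push_cast
    linarith
  have hL_ub : L ≤ K + 1000 := by
    have h0 : (0:ℝ) ≤ Real.logb 2 n / 2 + (1000:ℕ) := by
      have : (0:ℝ) ≤ (K:ℝ) := Nat.cast_nonneg K
      push_cast
      linarith
    have h1 : (L:ℝ) ≤ Real.logb 2 n / 2 + (1000:ℕ) := by
      rw [hLdef, Lp]; exact Nat.floor_le h0
    have hKnn : (0:ℝ) ≤ (K:ℝ) := Nat.cast_nonneg K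
    have h2 : (L:ℝ) < ((K + 1001 : ℕ):ℝ) := by push_cast at h1 ⊢; linarith
    have h3 : L < K + 1001 := by exact_mod_cast h2
    omega
  have hpow2 : 2*K + 2003 ≤ 2^K := aux_pow K hK12
  have hKn : 2^K ≤ n := Nat.pow_log_le_self 2 (by omega)
  have h2L : 2*L < n := by omega
  have hL1 : 1 ≤ L := by omega
  have hnK : n < 2^(K+1) := Nat.lt_pow_succ_log_self (by norm_num) n
  have hexp : K + 8 ≤ 2*L := by omega
  have e1 : (2:ℕ)^(K+8) ≤ 2^(2*L) := Nat.pow_le_pow_right (by norm_num) hexp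
  have e2 : (2:ℕ)^(K+8) = 128 * 2^(K+1) := by rw [pow_add, pow_add]; ring
  have h100 : 100 * n < 2^(2*L) := by omega
  have hHL : Hgraph n 1000 = twoPathClique n L := by rw [hLdef]; rfl
  unfold pebblingNumber
  rw [hHL]
  apply le_csInf
  · -- the set is nonempty: any configuration of size n * 2^n is solvable
    refine ⟨n * 2^n, fun C hsum => ?_⟩
    have hex : ∃ u : Fin n, 2^n ≤ C u := by
      by_contra hno
      push_neg at hno
      have hle : ∑ v, (C v + 1) ≤ ∑ _v : Fin n, 2^n :=
        Finset.sum_le_sum fun v _ => by have := hno v; omega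
      rw [Finset.sum_add_distrib, hsum, Finset.sum_const, Finset.sum_const, Finset.card_univ,
        Fintype.card_fin, smul_eq_mul, smul_eq_mul, mul_one] at hle
      omega
    obtain ⟨u, hu⟩ := hex
    intro v
    have hreach : (twoPathClique n L).Reachable u v :=
      (reach_hub hL1 h2L u).trans (reach_hub hL1 h2L v).symm
    obtain ⟨p⟩ := hreach
    have hlen : (p.toPath : (twoPathClique n L).Walk u v).length < n := by
      have := SimpleGraph.Walk.IsPath.length_lt p.toPath.2
      simpa using this
    apply walk_solve (p.toPath : (twoPathClique n L).Walk u v) C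
    calc 2^((p.toPath : (twoPathClique n L).Walk u v).length) ≤ 2^n :=
          Nat.pow_le_pow_right (by norm_num) (le_of_lt hlen)
      _ ≤ C u := hu
  · -- every member of the set is at least 100 n
    intro t ht
    by_contra hlt
    push_neg at hlt
    set v0 : Fin n := ⟨0, hn0⟩ with hv0
    set g : Fin n := ⟨L, by omega⟩ with hg
    set C0 : Fin n → ℕ := fun v => if v = v0 then t else 0 with hC0
    have hsum : ∑ v, C0 v = t := by
      rw [hC0, Finset.sum_ite_eq' Finset.univ v0 (fun _ => t)]
      simp
    have hsolv := ht C0 hsum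
    set w : Fin n → ℝ := fun v => (2:ℝ)^(-(fN L v.val : ℤ)) with hwdef
    have hw0 : ∀ v, 0 ≤ w v := fun v => le_of_lt (zpow_pos (by norm_num) _)
    have hw : ∀ a b : Fin n, (twoPathClique n L).Adj a b → w b ≤ 2 * w a := by
      intro a b hab
      rw [twoPathClique, SimpleGraph.fromRel_adj] at hab
      obtain ⟨hne, hrel⟩ := hab
      have hfab : fN L a.val ≤ fN L b.val + 1 := by
        rcases hrel with h | h
        · exact (fN_close h).1
        · exact (fN_close h).2
      have hz : (-(fN L b.val : ℤ)) ≤ 1 + (-(fN L a.val : ℤ)) := by omega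
      calc w b = (2:ℝ)^(-(fN L b.val:ℤ)) := rfl
        _ ≤ (2:ℝ)^(1 + -(fN L a.val:ℤ)) := zpow_le_zpow_right₀ one_le_two hz
        _ = 2 * (2:ℝ)^(-(fN L a.val:ℤ)) := by
            rw [zpow_add₀ (by norm_num : (2:ℝ) ≠ 0), zpow_one]
        _ = 2 * w a := rfl
    have hfg : fN L (g.val) = 0 := by
      show fN L L = 0
      unfold fN; split_ifs <;> omega
    have hwg : w g = 1 := by
      rw [hwdef]
      simp only [hfg]
      norm_num
    have hfv0 : fN L (v0.val) = 2*L := by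
      show fN L 0 = 2*L
      unfold fN; split_ifs <;> omega
    have hsum_lt : ∑ x, (C0 x:ℝ) * w x < w g := by
      have hpt : ∀ x : Fin n, (C0 x:ℝ) * w x = if x = v0 then (t:ℝ) * w v0 else 0 := by
        intro x
        by_cases hx : x = v0 <;> simp [hC0, hx]
      rw [Finset.sum_congr rfl (fun x _ => hpt x),
        Finset.sum_ite_eq' Finset.univ v0 (fun _ => (t:ℝ) * w v0)]
      simp only [Finset.mem_univ, if_true]
      rw [hwg]
      have hwv0 : w v0 = ((2:ℝ)^(2*L))⁻¹ := by
        rw [hwdef]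
        simp only [hfv0]
        rw [zpow_neg, zpow_natCast]
      rw [hwv0, ← div_eq_mul_inv, div_lt_one (by positivity)]
      exact_mod_cast (by omega : t < 2^(2*L))
    exact absurd hsolv (unsolvable_of_weight w hw0 hw C0 g hsum_lt)
end

section
/- With parameter m = 1000, for all sufficiently large n one has π(G_n) < π(H_n). -/
open Finset

section machinery
variable {V : Type*} [DecidableEq V] {G : SimpleGraph V}

/-- `k` moves from `u` to adjacent `v`. -/
lemma moves_many {u v : V} (h : G.Adj u v) (k : ℕ) (C : V → ℕ) (hC : 2 * k ≤ C u) :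
    Relation.ReflTransGen (PebblingMove G) C
      (fun w => if w = u then C u - 2 * k else if w = v then C v + k else C w) := by
  induction k generalizing C with
  | zero =>
    have : (fun w => if w = u then C u - 2 * 0 else if w = v then C v + 0 else C w) = C := by
      funext w
      by_cases hw : w = u <;> by_cases hw' : w = v <;> simp [hw, hw', h.ne, Ne.symm h.ne]
    rw [this]
  | succ k ih =>
    have huv : u ≠ v := h.ne
    set C₁ : V → ℕ := fun w => if w = u then C u - 2 else if w = v then C v + 1 else C w with hC₁
    have step : PebblingMove G C C₁ := ⟨u, v, h, by omega, rfl⟩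
    have h2 : 2 * k ≤ C₁ u := by simp [hC₁]; omega
    have := ih C₁ h2
    have heq : (fun w => if w = u then C₁ u - 2 * k else if w = v then C₁ v + k else C₁ w)
        = (fun w => if w = u then C u - 2 * (k + 1) else if w = v then C v + (k + 1) else C w) := by
      funext w
      by_cases hw : w = u
      · simp [hw, hC₁, huv]; omega
      · by_cases hw' : w = v
        · simp [hw, hw', hC₁, huv, Ne.symm huv]; omega
        · simp [hw, hw', hC₁]
    rw [heq] at this
    exact Relation.ReflTransGen.head step this

/-- Delivering a pebble along a walk. -/
lemma deliver {u v : V} (p : G.Walk u v) (C : V → ℕ) (h : 2 ^ p.length ≤ C u) :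
    ∃ C', Relation.ReflTransGen (PebblingMove G) C C' ∧ 1 ≤ C' v := by
  induction p generalizing C with
  | nil => exact ⟨C, Relation.ReflTransGen.refl, by simpa using h⟩
  | @cons a b c hab p ih =>
    rw [SimpleGraph.Walk.length_cons] at h
    have h2 : 2 * 2 ^ p.length ≤ C a := by rw [pow_succ] at h; omega
    have hreach := moves_many hab (2 ^ p.length) C h2
    set C₁ : V → ℕ := fun w => if w = a then C a - 2 * 2 ^ p.length
      else if w = b then C b + 2 ^ p.length else C w with hC₁
    have hb : 2 ^ p.length ≤ C₁ b := by
      simp only [hC₁]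
      by_cases hba : b = a
      · exact absurd hba.symm hab.ne
      · simp [hba]
    obtain ⟨C', hC', h1⟩ := ih C₁ hb
    exact ⟨C', hreach.trans hC', h1⟩

/-- Pooling pebbles from a set of neighbours of `v` onto `v`. -/
lemma pool (v : V) (S : Finset V) (hv : v ∉ S) (hadj : ∀ u ∈ S, G.Adj u v) (C : V → ℕ) :
    ∃ C', Relation.ReflTransGen (PebblingMove G) C C' ∧ C v + ∑ u ∈ S, C u / 2 ≤ C' v := by
  induction S using Finset.induction generalizing C with
  | empty => exact ⟨C, Relation.ReflTransGen.refl, by simp⟩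
  | @insert a S ha ih =>
    have hav : G.Adj a v := hadj a (Finset.mem_insert_self a S)
    have hva : v ≠ a := fun h => hv (h ▸ Finset.mem_insert_self a S)
    have hvS : v ∉ S := fun h => hv (Finset.mem_insert_of_mem h)
    have hreach := moves_many hav (C a / 2) C (Nat.mul_div_le (C a) 2)
    set C₁ : V → ℕ := fun w => if w = a then C a - 2 * (C a / 2)
      else if w = v then C v + C a / 2 else C w with hC₁
    obtain ⟨C', hC', hle⟩ := ih hvS (fun u hu => hadj u (Finset.mem_insert_of_mem hu)) C₁
    refine ⟨C', hreach.trans hC', ?_⟩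
    have h1 : C₁ v = C v + C a / 2 := by simp [hC₁, hva]
    have h2 : ∀ u ∈ S, C₁ u = C u := by
      intro u hu
      have hua : u ≠ a := fun h => ha (h ▸ hu)
      have huv : u ≠ v := fun h => hvS (h ▸ hu)
      simp [hC₁, hua, huv]
    have hsum : ∑ u ∈ S, C₁ u / 2 = ∑ u ∈ S, C u / 2 :=
      Finset.sum_congr rfl fun u hu => by rw [h2 u hu]
    rw [Finset.sum_insert ha]
    calc C v + (C a / 2 + ∑ u ∈ S, C u / 2)
        = C₁ v + ∑ u ∈ S, C₁ u / 2 := by rw [h1, hsum]; ring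
      _ ≤ C' v := hle

end machinery

section walks
variable {n : ℕ} {G : SimpleGraph (Fin n)}

/-- A walk along a chain of consecutive vertices. -/
lemma exists_walk_chain (a b : ℕ) (hab : a ≤ b) (hb : b < n)
    (hadj : ∀ j (h1 : a ≤ j) (h2 : j < b), G.Adj ⟨j, by omega⟩ ⟨j + 1, by omega⟩) :
    ∃ p : G.Walk ⟨a, by omega⟩ ⟨b, hb⟩, p.length = b - a := by
  induction b with
  | zero =>
    have : a = 0 := Nat.le_zero.mp hab
    subst this
    exact ⟨SimpleGraph.Walk.nil, by simp⟩
  | succ b ih =>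
    rcases Nat.lt_or_ge a (b + 1) with h | h
    · have hab' : a ≤ b := by omega
      have hb' : b < n := by omega
      obtain ⟨p, hp⟩ := ih hab' hb' (fun j hj hj' => hadj j hj (by omega))
      refine ⟨p.concat (hadj b hab' (by omega)), ?_⟩
      rw [SimpleGraph.Walk.length_concat, hp]; omega
    · have : a = b + 1 := by omega
      subst this
      exact ⟨SimpleGraph.Walk.nil, by simp⟩

end walks

section sums

lemma geom_tail (L M : ℕ) : ∑ j ∈ Finset.range L, 2 ^ (M - j) ≤ 2 ^ (M + 1) + L := by
  induction L generalizing M with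
  | zero => simp
  | succ L ih =>
    rw [Finset.sum_range_succ']
    have h1 : ∀ j, M - (j + 1) = (M - 1) - j := fun j => by omega
    have h2 : ∑ j ∈ Finset.range L, 2 ^ (M - (j + 1)) ≤ 2 ^ (M - 1 + 1) + L := by
      rw [Finset.sum_congr rfl fun j _ => by rw [h1 j]]; exact ih (M - 1)
    have h3 : 2 ^ (M - 1 + 1) ≤ 2 ^ M + 1 := by
      rcases Nat.eq_zero_or_pos M with hM | hM
      · subst hM; norm_num
      · have : M - 1 + 1 = M := by omega
        rw [this]; omega
    have h4 : (2:ℕ) ^ M ≤ 2 ^ (M + 1) := Nat.pow_le_pow_right (by norm_num) (by omega)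
    have h5 : (2:ℕ) ^ M + 2 ^ M = 2 ^ (M + 1) := by rw [pow_succ]; ring
    simp only [Nat.sub_zero]
    omega

lemma geom_sum_lt' (L : ℕ) : ∑ j ∈ Finset.range L, 2 ^ j < 2 ^ L := by
  induction L with
  | zero => simp
  | succ L ih =>
    rw [Finset.sum_range_succ, pow_succ]
    omega

lemma sum_fin_filter_lt {n L : ℕ} (hL : L ≤ n) (h : ℕ → ℕ) :
    ∑ i ∈ Finset.univ.filter (fun i : Fin n => i.val < L), h i.val
      = ∑ j ∈ Finset.range L, h j := by
  rw [Finset.sum_filter]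
  rw [Fin.sum_univ_eq_sum_range (fun j => if j < L then h j else 0) n]
  rw [← Finset.sum_filter]
  congr 1
  ext j
  simp only [Finset.mem_filter, Finset.mem_range]
  omega

/-- Pigeonhole: in a filtered sum, if the total is at least the sum of the weights
plus the cardinality bound, some element meets its weight. -/
lemma exists_ge_weight {n : ℕ} (P : Finset (Fin n)) (C w : Fin n → ℕ)
    (hlt : ∑ i ∈ P, w i < ∑ i ∈ P, C i) :
    ∃ i ∈ P, w i ≤ C i := by
  by_contra hc
  push_neg at hc
  have : ∑ i ∈ P, (C i + 1) ≤ ∑ i ∈ P, w i :=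
    Finset.sum_le_sum fun i hi => by have := hc i hi; omega
  rw [Finset.sum_add_distrib, Finset.sum_const, smul_eq_mul, mul_one] at this
  omega

end sums

section potential
variable {n : ℕ} {G : SimpleGraph (Fin n)}

/-- The weighted potential is non-increasing under pebbling moves, provided that the
weight at most doubles along each edge. -/
lemma potential_mono (g : Fin n → ℕ) (hg : ∀ u v, G.Adj u v → g v ≤ 2 * g u)
    {C C' : Fin n → ℕ} (h : Relation.ReflTransGen (PebblingMove G) C C') :
    ∑ i, C' i * g i ≤ ∑ i, C i * g i := by
  induction h with
  | refl => exact le_refl _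
  | @tail b c hReach hstep ih =>
    obtain ⟨u, v, hadj, hbu, hc⟩ := hstep
    have huv : u ≠ v := hadj.ne
    have key : ∀ D : Fin n → ℕ, ∑ i, D i * g i
        = D u * g u + (D v * g v + ∑ i ∈ (Finset.univ.erase u).erase v, D i * g i) := by
      intro D
      rw [Finset.add_sum_erase _ (fun i => D i * g i)
        (Finset.mem_erase.mpr ⟨huv.symm, Finset.mem_univ v⟩)]
      rw [Finset.add_sum_erase _ (fun i => D i * g i) (Finset.mem_univ u)]
    have hsame : ∀ i ∈ (Finset.univ.erase u).erase v, c i = b i := by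
      intro i hi
      rw [Finset.mem_erase, Finset.mem_erase] at hi
      rw [hc]
      simp [hi.2.1, hi.1]
    have hcu : c u = b u - 2 := by rw [hc]; simp
    have hcv : c v = b v + 1 := by rw [hc]; simp [huv.symm]
    have e1 := key c
    have e2 := key b
    have hs : ∑ i ∈ (Finset.univ.erase u).erase v, c i * g i
        = ∑ i ∈ (Finset.univ.erase u).erase v, b i * g i :=
      Finset.sum_congr rfl fun i hi => by rw [hsame i hi]
    rw [hs] at e1
    have hgv := hg u v hadj
    have hmul : (b u - 2) * g u = b u * g u - 2 * g u := by rw [Nat.sub_mul]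
    have hmul2 : 2 * g u ≤ b u * g u := Nat.mul_le_mul_right _ hbu
    calc ∑ i, c i * g i
        = (b u - 2) * g u + ((b v + 1) * g v + ∑ i ∈ (Finset.univ.erase u).erase v, b i * g i) := by
          rw [e1, hcu, hcv]
      _ ≤ ∑ i, b i * g i := by rw [e2, add_mul, one_mul, hmul]; omega
      _ ≤ ∑ i, C i * g i := ih

end potential

section Gside

lemma pc_chain_adj {n L : ℕ} (hLn : L < n) (j : ℕ) (hj : j < L) :
    (pathClique n L).Adj ⟨j, by omega⟩ ⟨j + 1, by omega⟩ := by
  rw [pathClique, SimpleGraph.fromRel_adj]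
  constructor
  · intro h
    have := congrArg Fin.val h
    simp at this
  · left; exact Or.inl ⟨rfl, hj⟩

lemma pc_clique_adj {n L : ℕ} (u v : Fin n) (hu : L ≤ u.val) (hv : L ≤ v.val) (huv : u ≠ v) :
    (pathClique n L).Adj u v := by
  rw [pathClique, SimpleGraph.fromRel_adj]
  exact ⟨huv, Or.inl (Or.inr ⟨hu, hv⟩)⟩

lemma G_upper (n : ℕ) (h16 : 16 ≤ n) :
    ∀ C : Fin n → ℕ, (∑ v, C v) = 100 * n → Solvable (Ggraph n) C := by
  intro C hsum v
  set L := Nat.log 2 n with hLdef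
  have hn0 : n ≠ 0 := by omega
  have hpow : 2 ^ L ≤ n := Nat.pow_log_le_self 2 hn0
  have hpow2 : n < 2 ^ (L + 1) := Nat.lt_pow_succ_log_self (by norm_num) n
  have hLn : L < n := lt_of_lt_of_le (Nat.lt_two_pow_self (n := L)) hpow
  set P : Finset (Fin n) := Finset.univ.filter (fun i : Fin n => i.val < L) with hPdef
  set K : Finset (Fin n) := Finset.univ.filter (fun i : Fin n => ¬ i.val < L) with hKdef
  have hsplit : ∑ i ∈ P, C i + ∑ i ∈ K, C i = 100 * n := by
    rw [hPdef, hKdef, Finset.sum_filter_add_sum_filter_not]; exact hsum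
  have hGdef : Ggraph n = pathClique n L := rfl
  by_cases hK : 3 * n ≤ ∑ u ∈ K, C u
  · -- plenty of pebbles on the clique: pool them
    by_cases hv : v.val < L
    · -- target on the path: pool onto the hub ⟨L⟩, then walk down
      set hub : Fin n := ⟨L, hLn⟩ with hhub
      have hhubK : hub ∈ K := by simp [hKdef, hhub]
      have hadj : ∀ u ∈ K.erase hub, (Ggraph n).Adj u hub := by
        intro u hu
        rw [Finset.mem_erase, hKdef, Finset.mem_filter] at hu
        exact hGdef ▸ pc_clique_adj u hub (by omega) (by simp [hhub]) hu.1
      obtain ⟨C1, hr1, hge⟩ := pool hub (K.erase hub) (Finset.notMem_erase _ _) hadj C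
      have hbig : n ≤ C1 hub := by
        have h1 : ∑ u ∈ K.erase hub, C u ≤ 2 * (∑ u ∈ K.erase hub, C u / 2) + (K.erase hub).card := by
          rw [Finset.mul_sum]
          calc ∑ u ∈ K.erase hub, C u ≤ ∑ u ∈ K.erase hub, (2 * (C u / 2) + 1) :=
                Finset.sum_le_sum fun u _ => by omega
            _ = ∑ u ∈ K.erase hub, 2 * (C u / 2) + (K.erase hub).card := by
                rw [Finset.sum_add_distrib, Finset.sum_const, smul_eq_mul, mul_one]
        have h2 : (K.erase hub).card ≤ n := le_trans (Finset.card_le_univ _) (by simp)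
        have h3 : C hub + ∑ u ∈ K.erase hub, C u = ∑ u ∈ K, C u :=
          Finset.add_sum_erase K C hhubK
        omega
      -- walk from hub down to v
      obtain ⟨p, hp⟩ := exists_walk_chain (G := Ggraph n) v.val L (le_of_lt hv) hLn
        (fun j h1 h2 => hGdef ▸ pc_chain_adj hLn j h2)
      obtain ⟨C', hr2, h1⟩ := deliver p.reverse C1 (by
        rw [SimpleGraph.Walk.length_reverse, hp]
        calc 2 ^ (L - v.val) ≤ 2 ^ L := Nat.pow_le_pow_right (by norm_num) (by omega)
          _ ≤ n := hpow
          _ ≤ C1 hub := hbig)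
      refine ⟨C', hr1.trans hr2, ?_⟩
      rwa [Fin.eta] at h1
    · -- target in the clique: pool onto v itself
      have hvK : v ∈ K := by rw [hKdef, Finset.mem_filter]; exact ⟨Finset.mem_univ v, hv⟩
      have hadj : ∀ u ∈ K.erase v, (Ggraph n).Adj u v := by
        intro u hu
        rw [Finset.mem_erase, hKdef, Finset.mem_filter] at hu
        exact hGdef ▸ pc_clique_adj u v (by omega) (by omega) hu.1
      obtain ⟨C1, hr1, hge⟩ := pool v (K.erase v) (Finset.notMem_erase _ _) hadj C
      have hbig : n ≤ C1 v := by
        have h1 : ∑ u ∈ K.erase v, C u ≤ 2 * (∑ u ∈ K.erase v, C u / 2) + (K.erase v).card := by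
          rw [Finset.mul_sum]
          calc ∑ u ∈ K.erase v, C u ≤ ∑ u ∈ K.erase v, (2 * (C u / 2) + 1) :=
                Finset.sum_le_sum fun u _ => by omega
            _ = ∑ u ∈ K.erase v, 2 * (C u / 2) + (K.erase v).card := by
                rw [Finset.sum_add_distrib, Finset.sum_const, smul_eq_mul, mul_one]
        have h2 : (K.erase v).card ≤ n := le_trans (Finset.card_le_univ _) (by simp)
        have h3 : C v + ∑ u ∈ K.erase v, C u = ∑ u ∈ K, C u :=
          Finset.add_sum_erase K C hvK
        omega
      exact ⟨C1, hr1, by omega⟩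
  · -- most pebbles on the path
    have hP : 97 * n ≤ ∑ i ∈ P, C i := by omega
    by_cases hv : v.val < L
    · -- target on the path
      set k := v.val with hk
      set w : Fin n → ℕ := fun i => 2 ^ (k - i.val) * 2 ^ (i.val - k) with hw
      have hwbound : ∑ i ∈ P, w i ≤ 3 * n := by
        rw [hPdef, hw, sum_fin_filter_lt (le_of_lt hLn) (fun j => 2 ^ (k - j) * 2 ^ (j - k))]
        calc ∑ j ∈ Finset.range L, 2 ^ (k - j) * 2 ^ (j - k)
            ≤ ∑ j ∈ Finset.range L, (2 ^ (k - j) + 2 ^ (j - k)) := by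
              refine Finset.sum_le_sum fun j _ => ?_
              rcases le_total j k with h | h
              · have : j - k = 0 := by omega
                rw [this, pow_zero, mul_one]; omega
              · have : k - j = 0 := by omega
                rw [this, pow_zero, one_mul]; omega
          _ = ∑ j ∈ Finset.range L, 2 ^ (k - j) + ∑ j ∈ Finset.range L, 2 ^ (j - k) :=
              Finset.sum_add_distrib
          _ ≤ (2 ^ (k + 1) + L) + 2 ^ L := by
              have := geom_tail L k
              have h2 : ∑ j ∈ Finset.range L, 2 ^ (j - k) ≤ ∑ j ∈ Finset.range L, 2 ^ j :=
                Finset.sum_le_sum fun j _ => Nat.pow_le_pow_right (by norm_num) (by omega)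
              have h3 := geom_sum_lt' L
              omega
          _ ≤ 3 * n := by
              have h1 : 2 ^ (k + 1) ≤ 2 ^ L := Nat.pow_le_pow_right (by norm_num) (by omega)
              omega
      obtain ⟨i, hiP, hwi⟩ := exists_ge_weight P C w (by omega)
      have hiL : i.val < L := by
        rw [hPdef, Finset.mem_filter] at hiP; exact hiP.2
      rcases le_total i.val k with hik | hik
      · obtain ⟨p, hp⟩ := exists_walk_chain (G := Ggraph n) i.val k hik (by omega)
          (fun j h1 h2 => hGdef ▸ pc_chain_adj hLn j (by omega))
        obtain ⟨C', hr, h1⟩ := deliver p C (by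
          rw [hp, Fin.eta]
          have : i.val - k = 0 := by omega
          rw [hw] at hwi
          simp only [this, pow_zero, mul_one] at hwi
          exact hwi)
        exact ⟨C', hr, by rwa [Fin.eta] at h1⟩
      · obtain ⟨p, hp⟩ := exists_walk_chain (G := Ggraph n) k i.val hik i.isLt
          (fun j h1 h2 => hGdef ▸ pc_chain_adj hLn j (by omega))
        obtain ⟨C', hr, h1⟩ := deliver p.reverse C (by
          rw [SimpleGraph.Walk.length_reverse, hp, Fin.eta]
          have : k - i.val = 0 := by omega
          rw [hw] at hwi
          simp only [this, pow_zero, one_mul] at hwi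
          exact hwi)
        exact ⟨C', hr, by rwa [Fin.eta] at h1⟩
    · -- target in the clique
      set w : Fin n → ℕ := fun i => 2 ^ ((L + 1) - i.val) with hw
      have hwbound : ∑ i ∈ P, w i ≤ 5 * n := by
        rw [hPdef, hw, sum_fin_filter_lt (le_of_lt hLn) (fun j => 2 ^ ((L + 1) - j))]
        have := geom_tail L (L + 1)
        have h1 : (2:ℕ) ^ (L + 1 + 1) = 4 * 2 ^ L := by ring
        omega
      obtain ⟨i, hiP, hwi⟩ := exists_ge_weight P C w (by omega)
      have hiL : i.val < L := by
        rw [hPdef, Finset.mem_filter] at hiP; exact hiP.2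
      obtain ⟨p, hp⟩ := exists_walk_chain (G := Ggraph n) i.val L (le_of_lt hiL) hLn
        (fun j h1 h2 => hGdef ▸ pc_chain_adj hLn j h2)
      by_cases hvL : v = ⟨L, hLn⟩
      · subst hvL
        obtain ⟨C', hr, h1⟩ := deliver p C (by
          rw [hp, Fin.eta]
          calc 2 ^ (L - i.val) ≤ 2 ^ (L + 1 - i.val) :=
            Nat.pow_le_pow_right (by norm_num) (by omega)
          _ ≤ C i := hwi)
        exact ⟨C', hr, h1⟩
      · have hadj : (Ggraph n).Adj ⟨L, hLn⟩ v :=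
          hGdef ▸ pc_clique_adj _ v (le_refl L) (by omega) (fun h => hvL h.symm)
        obtain ⟨C', hr, h1⟩ := deliver (p.concat hadj) C (by
          rw [SimpleGraph.Walk.length_concat, hp, Fin.eta]
          have : L - i.val + 1 = L + 1 - i.val := by omega
          rw [this]
          exact hwi)
        exact ⟨C', hr, h1⟩

end Gside

section Hside

lemma tpc_adj (n L : ℕ) (u v : Fin n) (huv : u ≠ v)
    (h : (u.val + 1 = v.val ∧ v.val < L) ∨
         (L ≤ u.val ∧ v.val = u.val + 1 ∧ v.val < 2 * L) ∨
         (2 * L ≤ u.val ∧ 2 * L ≤ v.val) ∨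
         (u.val + 1 = L ∧ v.val = 2 * L) ∨
         (u.val + 1 = 2 * L ∧ v.val = 2 * L)) :
    (twoPathClique n L).Adj u v := by
  rw [twoPathClique, SimpleGraph.fromRel_adj]
  refine ⟨huv, Or.inl ?_⟩
  rcases h with h | h | h | h | h
  · exact Or.inl ⟨h.1.symm, h.2⟩
  · exact Or.inr (Or.inl h)
  · exact Or.inr (Or.inr (Or.inl h))
  · exact Or.inr (Or.inr (Or.inr (Or.inl h)))
  · exact Or.inr (Or.inr (Or.inr (Or.inr h)))

lemma fin_mk_ne {n : ℕ} (a b : ℕ) (ha : a < n) (hb : b < n) (h : a ≠ b) :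
    (⟨a, ha⟩ : Fin n) ≠ ⟨b, hb⟩ := by
  intro hc
  exact h (congrArg Fin.val hc)

/-- Every vertex has a short walk to the hub `⟨2L⟩`. -/
lemma tpc_walk_to_hub (n L : ℕ) (hL : 1 ≤ L) (h2L : 2 * L < n) (x : Fin n) :
    ∃ p : (twoPathClique n L).Walk x ⟨2 * L, h2L⟩, p.length ≤ L + 1 := by
  rcases Nat.lt_or_ge x.val L with hx | hx
  · -- on the first path
    obtain ⟨p, hp⟩ := exists_walk_chain (G := twoPathClique n L) x.val (L - 1) (by omega) (by omega)
      (fun j h1 h2 => tpc_adj n L _ _ (fin_mk_ne _ _ _ _ (by omega))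
        (Or.inl ⟨rfl, show j + 1 < L by omega⟩))
    have hadj : (twoPathClique n L).Adj ⟨L - 1, by omega⟩ ⟨2 * L, h2L⟩ :=
      tpc_adj n L _ _ (fin_mk_ne _ _ _ _ (by omega))
        (Or.inr (Or.inr (Or.inr (Or.inl ⟨show (L - 1) + 1 = L by omega, rfl⟩))))
    refine ⟨((p.concat hadj).copy (Fin.eta x x.isLt) rfl), ?_⟩
    rw [SimpleGraph.Walk.length_copy, SimpleGraph.Walk.length_concat, hp]
    omega
  · rcases Nat.lt_or_ge x.val (2 * L) with hx2 | hx2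
    · -- on the second path
      obtain ⟨p, hp⟩ := exists_walk_chain (G := twoPathClique n L) x.val (2 * L - 1) (by omega) (by omega)
        (fun j h1 h2 => tpc_adj n L _ _ (fin_mk_ne _ _ _ _ (by omega))
          (Or.inr (Or.inl ⟨show L ≤ j by omega, rfl, show j + 1 < 2 * L by omega⟩)))
      have hadj : (twoPathClique n L).Adj ⟨2 * L - 1, by omega⟩ ⟨2 * L, h2L⟩ :=
        tpc_adj n L _ _ (fin_mk_ne _ _ _ _ (by omega))
          (Or.inr (Or.inr (Or.inr (Or.inr ⟨show (2 * L - 1) + 1 = 2 * L by omega, rfl⟩))))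
      refine ⟨((p.concat hadj).copy (Fin.eta x x.isLt) rfl), ?_⟩
      rw [SimpleGraph.Walk.length_copy, SimpleGraph.Walk.length_concat, hp]
      omega
    · -- in the clique
      by_cases hxh : x = ⟨2 * L, h2L⟩
      · subst hxh; exact ⟨SimpleGraph.Walk.nil, by simp⟩
      · have hadj : (twoPathClique n L).Adj x ⟨2 * L, h2L⟩ :=
          tpc_adj n L _ _ hxh (Or.inr (Or.inr (Or.inl ⟨hx2, le_refl _⟩)))
        exact ⟨hadj.toWalk, by rw [SimpleGraph.Walk.length_cons, SimpleGraph.Walk.length_nil]; omega⟩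

/-- The two-path graph has some solvable size, namely `n * 4^n`. -/
lemma H_upper (n L : ℕ) (hL : 1 ≤ L) (h2L : 2 * L < n) :
    ∀ C : Fin n → ℕ, (∑ v, C v) = n * 4 ^ n → Solvable (twoPathClique n L) C := by
  intro C hsum v
  have hn0 : 0 < n := by omega
  -- some vertex has at least 4^n pebbles
  have hbig : ∃ u : Fin n, 4 ^ n ≤ C u := by
    by_contra hc
    push_neg at hc
    have : ∑ u : Fin n, C u ≤ ∑ _u : Fin n, (4 ^ n - 1) :=
      Finset.sum_le_sum fun u _ => by have := hc u; omega
    rw [Finset.sum_const, smul_eq_mul, Finset.card_univ, Fintype.card_fin] at this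
    have h4 : 1 ≤ 4 ^ n := Nat.one_le_pow _ _ (by norm_num)
    have h5 : n * (4 ^ n - 1) + n * 1 = n * 4 ^ n := by
      rw [← Nat.mul_add]; congr 1; omega
    omega
  obtain ⟨u, hu⟩ := hbig
  obtain ⟨pu, hpu⟩ := tpc_walk_to_hub n L hL h2L u
  obtain ⟨pv, hpv⟩ := tpc_walk_to_hub n L hL h2L v
  have hlen : (pu.append pv.reverse).length ≤ 2 * n := by
    rw [SimpleGraph.Walk.length_append, SimpleGraph.Walk.length_reverse]
    omega
  obtain ⟨C', hr, h1⟩ := deliver (pu.append pv.reverse) C (by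
    calc 2 ^ (pu.append pv.reverse).length ≤ 2 ^ (2 * n) :=
        Nat.pow_le_pow_right (by norm_num) hlen
      _ = 4 ^ n := by rw [pow_mul]; norm_num
      _ ≤ C u := hu)
  exact ⟨C', hr, h1⟩

/-- A spike of fewer than `4^L` pebbles on vertex `0` cannot reach vertex `L`. -/
lemma H_spike_unsolvable (n L : ℕ) (hL : 1 ≤ L) (h2L : 2 * L < n) (s : ℕ) (hs : s < 4 ^ L) :
    ¬ Solvable (twoPathClique n L) (fun i => if i = ⟨0, by omega⟩ then s else 0) := by
  set f : ℕ → ℕ := fun j =>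
    if j < L then 2 * L - j else if j < 2 * L then j - L else if j = 2 * L then L else L + 1
    with hf
  have hf_le : ∀ j, f j ≤ 2 * L := by
    intro j; simp only [hf]; split_ifs <;> omega
  have hadj_f : ∀ u v : Fin n, (twoPathClique n L).Adj u v → f u.val ≤ f v.val + 1 := by
    intro u v hadj
    rw [twoPathClique, SimpleGraph.fromRel_adj] at hadj
    obtain ⟨-, hrel⟩ := hadj
    simp only [hf]
    rcases hrel with (h|h|h|h|h) | (h|h|h|h|h) <;> split_ifs <;> omega
  set g : Fin n → ℕ := fun i => 2 ^ (2 * L - f i.val) with hg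
  have hgadj : ∀ u v : Fin n, (twoPathClique n L).Adj u v → g v ≤ 2 * g u := by
    intro u v hadj
    have h1 := hadj_f u v hadj
    have h2 := hf_le u.val
    have h3 := hf_le v.val
    simp only [hg]
    calc 2 ^ (2 * L - f v.val) ≤ 2 ^ ((2 * L - f u.val) + 1) :=
        Nat.pow_le_pow_right (by norm_num) (by omega)
      _ = 2 * 2 ^ (2 * L - f u.val) := by rw [pow_succ]; ring
  intro hS
  obtain ⟨C', hr, h1⟩ := hS ⟨L, by omega⟩
  have hmono := potential_mono g hgadj hr
  have hzero : f 0 = 2 * L := by simp only [hf]; split_ifs <;> omega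
  have hstart : ∑ i : Fin n, (if i = (⟨0, by omega⟩ : Fin n) then s else 0) * g i = s := by
    have : ∀ i : Fin n, (if i = (⟨0, by omega⟩ : Fin n) then s else 0) * g i
        = if i = (⟨0, by omega⟩ : Fin n) then s * g ⟨0, by omega⟩ else 0 := by
      intro i
      by_cases h : i = (⟨0, by omega⟩ : Fin n) <;> simp [h]
    rw [Finset.sum_congr rfl fun i _ => this i, Finset.sum_ite_eq' Finset.univ _
      (fun _ => s * g ⟨0, by omega⟩)]
    simp only [Finset.mem_univ, if_true, hg, hzero]
    simp
  have htgt : f L = 0 := by simp only [hf]; split_ifs <;> omega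
  have hgt : 4 ^ L ≤ ∑ i : Fin n, C' i * g i := by
    calc (4:ℕ) ^ L = 2 ^ (2 * L) := by rw [pow_mul]; norm_num
      _ = 1 * g ⟨L, by omega⟩ := by simp only [hg, htgt, Nat.sub_zero, one_mul]
      _ ≤ C' ⟨L, by omega⟩ * g ⟨L, by omega⟩ := Nat.mul_le_mul_right _ h1
      _ ≤ ∑ i : Fin n, C' i * g i :=
        Finset.single_le_sum (f := fun i => C' i * g i) (fun i _ => Nat.zero_le _)
          (Finset.mem_univ _)
  rw [hstart] at hmono
  omega

end Hside

lemma three_mul_le_two_pow (L : ℕ) (h : 4 ≤ L) : 3 * L ≤ 2 ^ L := by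
  induction L with
  | zero => omega
  | succ L ih =>
    rcases Nat.lt_or_ge L 4 with h4 | h4
    · have hL3 : L = 3 := by omega
      subst hL3; norm_num
    · have := ih (by omega)
      have h2 : (2:ℕ) ^ L ≥ 16 := by
        calc (16:ℕ) = 2 ^ 4 := by norm_num
          _ ≤ 2 ^ L := Nat.pow_le_pow_right (by norm_num) h4
      rw [pow_succ]
      omega


/-- With `m = 1000`, for all sufficiently large `n`, `π(G_n) < π(H_n)`. -/
theorem pebblingNumber_Ggraph_lt_Hgraph : ∃ N : ℕ, ∀ n : ℕ, N ≤ n →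
    pebblingNumber (Ggraph n) < pebblingNumber (Hgraph n 1000) := by
  refine ⟨2 ^ 5000, fun n hn => ?_⟩
  have hNbig : (16:ℕ) ≤ 2 ^ 5000 := by
    calc (16:ℕ) = 2 ^ 4 := by norm_num
      _ ≤ 2 ^ 5000 := Nat.pow_le_pow_right (by norm_num) (by norm_num)
  have h16 : 16 ≤ n := le_trans hNbig hn
  have hn0 : 0 < n := by omega
  set L := Nat.log 2 n with hLdef
  have hL5000 : 5000 ≤ L := (Nat.le_log_iff_pow_le (by norm_num) (by omega)).mpr hn
  have hpowL : 2 ^ L ≤ n := Nat.pow_log_le_self 2 (by omega)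
  have hpow2 : n < 2 ^ (L + 1) := Nat.lt_pow_succ_log_self (by norm_num) n
  set L' := Lp n 1000 with hL'def
  have hlogb_nonneg : (0:ℝ) ≤ Real.logb 2 n :=
    Real.logb_nonneg (by norm_num) (by exact_mod_cast Nat.one_le_iff_ne_zero.mpr (by omega))
  have hL'1000 : 1000 ≤ L' := by
    rw [hL'def, Lp]
    refine Nat.le_floor ?_
    push_cast
    linarith
  -- upper bound on L'
  have hlogb_up : Real.logb 2 n ≤ L + 1 := by
    rw [Real.logb_le_iff_le_rpow (by norm_num) (by exact_mod_cast hn0)]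
    have : ((n:ℝ)) ≤ ((2 ^ (L + 1) : ℕ) : ℝ) := by exact_mod_cast le_of_lt hpow2
    calc (n:ℝ) ≤ ((2 ^ (L + 1) : ℕ) : ℝ) := this
      _ = (2:ℝ) ^ ((L + 1 : ℕ) : ℝ) := by
          rw [Real.rpow_natCast]; push_cast; ring
      _ = (2:ℝ) ^ ((L:ℝ) + 1) := by norm_num
  have hL'up : L' ≤ L + 1001 := by
    have h1 : (L' : ℝ) ≤ Real.logb 2 n / 2 + 1000 := by
      rw [hL'def, Lp]
      exact_mod_cast Nat.floor_le (by push_cast; linarith)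
    have h2 : (L' : ℝ) ≤ (L:ℝ) + 1001 := by linarith
    exact_mod_cast (by push_cast at h2 ⊢; linarith : (L' : ℝ) ≤ ((L + 1001 : ℕ) : ℝ))
  have h2L' : 2 * L' < n := by
    have h3 : 3 * L ≤ 2 ^ L := three_mul_le_two_pow L (by omega)
    omega
  have hL'1 : 1 ≤ L' := by omega
  -- the key size comparison
  have hkey : 100 * n < 4 ^ L' := by
    have hfl : Real.logb 2 n / 2 + 1000 < (L' : ℝ) + 1 := by
      rw [hL'def, Lp]; exact Nat.lt_floor_add_one _
    have hexp : Real.logb 2 n + 1998 < ((2 * L' : ℕ) : ℝ) := by push_cast; linarith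
    have hrpow : (2:ℝ) ^ (Real.logb 2 n + 1998) < (2:ℝ) ^ (((2 * L' : ℕ) : ℝ)) :=
      (Real.rpow_lt_rpow_left_iff (by norm_num)).mpr hexp
    have hsplit : (2:ℝ) ^ (Real.logb 2 n + 1998) = (n:ℝ) * (2:ℝ) ^ (1998:ℕ) := by
      rw [Real.rpow_add (by norm_num), Real.rpow_logb (by norm_num) (by norm_num)
        (by exact_mod_cast hn0)]
      congr 1
      rw [← Real.rpow_natCast 2 1998]
      norm_num
    have hcast : (2:ℝ) ^ (((2 * L' : ℕ) : ℝ)) = ((4 ^ L' : ℕ) : ℝ) := by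
      rw [Real.rpow_natCast]
      push_cast
      rw [pow_mul]
      norm_num
    have h100 : (100:ℝ) ≤ (2:ℝ) ^ (1998:ℕ) := by
      calc (100:ℝ) ≤ 2 ^ 7 := by norm_num
        _ ≤ 2 ^ (1998:ℕ) := pow_le_pow_right₀ (by norm_num) (by norm_num)
    have hl1 : ((100 * n : ℕ) : ℝ) = 100 * (n:ℝ) := by push_cast; ring
    have : ((100 * n : ℕ) : ℝ) < ((4 ^ L' : ℕ) : ℝ) := by
      rw [hl1]
      calc (100:ℝ) * n ≤ (2:ℝ) ^ (1998:ℕ) * n :=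
            mul_le_mul_of_nonneg_right h100 (Nat.cast_nonneg n)
        _ = (n:ℝ) * (2:ℝ) ^ (1998:ℕ) := by ring
        _ = (2:ℝ) ^ (Real.logb 2 n + 1998) := hsplit.symm
        _ < (2:ℝ) ^ (((2 * L' : ℕ) : ℝ)) := hrpow
        _ = ((4 ^ L' : ℕ) : ℝ) := hcast
    exact_mod_cast this
  -- G has small pebbling number
  have hGle : pebblingNumber (Ggraph n) ≤ 100 * n := by
    apply Nat.sInf_le
    exact G_upper n h16
  -- H has large pebbling number
  have hHeq : Hgraph n 1000 = twoPathClique n L' := rfl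
  have hHne : (Set.Nonempty {t : ℕ | ∀ C : Fin n → ℕ, (∑ v, C v) = t → Solvable (Hgraph n 1000) C}) := by
    exact ⟨n * 4 ^ n, by rw [hHeq]; exact H_upper n L' hL'1 h2L'⟩
  have hHmem := Nat.sInf_mem hHne
  have hHgt : 100 * n < pebblingNumber (Hgraph n 1000) := by
    by_contra hc
    push_neg at hc
    have hp : pebblingNumber (Hgraph n 1000) ∈
        {t : ℕ | ∀ C : Fin n → ℕ, (∑ v, C v) = t → Solvable (Hgraph n 1000) C} :=
      Nat.sInf_mem hHne
    have hsolv := hp (fun i : Fin n => if i = ⟨0, by omega⟩ then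
        pebblingNumber (Hgraph n 1000) else 0)
      (by rw [Finset.sum_ite_eq' Finset.univ (⟨0, by omega⟩ : Fin n)
            (fun _ => pebblingNumber (Hgraph n 1000))]
          simp)
    exact H_spike_unsolvable n L' hL'1 h2L' (pebblingNumber (Hgraph n 1000)) (by omega) hsolv
  omega
end

section
/- Let t = t(n) = ⌊n^{0.8}⌋. The proportion, among all C(n+t−1, t) configurations of t pebbles on n vertices, of those configurations whose number of birthdays B(C) is at most n^{0.55}, tends to 0 as n → ∞. Equivalently, a uniformly random configuration of ⌊n^{0.8}⌋ pebbles on n vertices has at least n^{0.55} birthdays with probability tending to 1. -/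
open Finset

/-! ### Auxiliary definitions and lemmas -/

def supC {n : ℕ} (C : Fin n → ℕ) : ℕ := (Finset.univ.filter fun i => 1 ≤ C i).card

lemma sum_card_aux (α : Type*) [Fintype α] [DecidableEq α] (m : ℕ) :
    Nat.card {C : α → ℕ // ∑ i, C i = m} = (Fintype.card α + m - 1).choose m := by
  have e : {C : α → ℕ // ∑ i, C i = m} ≃ Sym α m := by
    refine Equiv.subtypeEquiv
      ((Finsupp.equivFunOnFinite.symm).trans Multiset.toFinsupp.symm.toEquiv) fun C => ?_
    rw [← Multiset.toFinsupp_sum_eq]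
    simp [Finsupp.sum_fintype]
  rw [Nat.card_congr e, Nat.card_eq_fintype_card, Sym.card_sym_eq_choose]

lemma supC_le {n : ℕ} (C : Fin n → ℕ) : supC C ≤ ∑ i, C i := by
  calc supC C = ∑ _i ∈ Finset.univ.filter fun i => 1 ≤ C i, 1 := by
        simp [supC]
    _ ≤ ∑ i ∈ Finset.univ.filter fun i => 1 ≤ C i, C i :=
        Finset.sum_le_sum fun i hi => (Finset.mem_filter.1 hi).2
    _ ≤ ∑ i, C i := Finset.sum_le_sum_of_subset (Finset.filter_subset _ _)

lemma config_iff (n t : ℕ) (C : Fin n → ℕ) : C ∈ configs n t ↔ ∑ i, C i = t := by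
  simp only [configs, Finset.mem_filter, Fintype.mem_piFinset, Finset.mem_range]
  refine ⟨fun h => h.2, fun h => ⟨fun i => ?_, h⟩⟩
  have : C i ≤ ∑ j, C j := Finset.single_le_sum (fun j _ => Nat.zero_le _) (Finset.mem_univ i)
  omega

section fixedsupp
variable {n t : ℕ} (S : Finset (Fin n))

lemma forward_sum {C : Fin n → ℕ} (hsum : ∑ i, C i = t)
    (hsupp : Finset.univ.filter (fun i => 1 ≤ C i) = S) :
    ∑ x : ↥S, (C x - 1) = t - S.card := by
  have hpos : ∀ i ∈ S, 1 ≤ C i := fun i hi => by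
    rw [← hsupp] at hi; exact (Finset.mem_filter.1 hi).2
  have hzero : ∀ i ∉ S, C i = 0 := by
    intro i hi; rw [← hsupp] at hi
    by_contra h
    exact hi (Finset.mem_filter.2 ⟨Finset.mem_univ i, by omega⟩)
  have hsum' : ∑ i ∈ S, C i = t := by
    rw [Finset.sum_subset (Finset.subset_univ S) fun i _ hi => hzero i hi]; exact hsum
  have hcard : S.card ≤ t := by
    rw [← hsum']
    calc S.card = ∑ _i ∈ S, 1 := by simp
      _ ≤ ∑ i ∈ S, C i := Finset.sum_le_sum hpos
  have key : ∑ x : ↥S, (C x - 1) + S.card = t := by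
    rw [Finset.univ_eq_attach, Finset.sum_attach S (fun i => C i - 1), ← hsum',
      Finset.card_eq_sum_ones, ← Finset.sum_add_distrib]
    exact Finset.sum_congr rfl fun i hi => Nat.sub_add_cancel (hpos i hi)
  omega

lemma back_sum (hS : S.card ≤ t) (D : ↥S → ℕ) (hD : ∑ x, D x = t - S.card) :
    ∑ i, (if h : i ∈ S then D ⟨i, h⟩ + 1 else 0) = t := by
  rw [← Finset.sum_subset (Finset.subset_univ S) (fun i _ hi => dif_neg hi),
    ← Finset.sum_attach S (fun i => if h : i ∈ S then D ⟨i, h⟩ + 1 else 0)]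
  have : ∀ x : ↥S, (if h : (x : Fin n) ∈ S then D ⟨x, h⟩ + 1 else 0) = D x + 1 := by
    intro x; rw [dif_pos x.2]
  rw [Finset.sum_congr rfl fun x _ => this x, Finset.sum_add_distrib, ← Finset.univ_eq_attach, hD]
  simp only [Finset.sum_const, Finset.card_univ, Fintype.card_coe, smul_eq_mul, mul_one]
  omega

lemma back_supp (D : ↥S → ℕ) :
    Finset.univ.filter (fun i => 1 ≤ (if h : i ∈ S then D ⟨i, h⟩ + 1 else 0)) = S := by
  ext i
  simp only [Finset.mem_filter, Finset.mem_univ, true_and]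
  by_cases h : i ∈ S
  · simp [h]
  · simp [h]

lemma card_fixed_supp (hS : S.card ≤ t) :
    Nat.card {C : Fin n → ℕ // ∑ i, C i = t ∧ Finset.univ.filter (fun i => 1 ≤ C i) = S}
      = (t - 1).choose (t - S.card) := by
  have e : {C : Fin n → ℕ // ∑ i, C i = t ∧ Finset.univ.filter (fun i => 1 ≤ C i) = S}
      ≃ {D : (↥S) → ℕ // ∑ x, D x = t - S.card} :=
    { toFun := fun C => ⟨fun x => C.1 x - 1, forward_sum S C.2.1 C.2.2⟩
      invFun := fun D => ⟨fun i => if h : i ∈ S then D.1 ⟨i, h⟩ + 1 else 0,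
        back_sum S hS D.1 D.2, back_supp S D.1⟩
      left_inv := by
        rintro ⟨C, hsum, hsupp⟩
        apply Subtype.ext
        funext i
        dsimp only
        by_cases h : i ∈ S
        · rw [dif_pos h]
          have : 1 ≤ C i := by rw [← hsupp] at h; exact (Finset.mem_filter.1 h).2
          omega
        · rw [dif_neg h]
          rw [← hsupp] at h
          by_contra hc
          exact h (Finset.mem_filter.2 ⟨Finset.mem_univ i, by omega⟩)
      right_inv := by
        rintro ⟨D, hD⟩
        apply Subtype.ext
        funext x
        dsimp only
        rw [dif_pos x.2]
        simp }
  rw [Nat.card_congr e, sum_card_aux, Fintype.card_coe]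
  congr 1
  omega
end fixedsupp

lemma filter_card_eq_natCard {n t : ℕ} (p : (Fin n → ℕ) → Prop) [DecidablePred p] :
    ((configs n t).filter p).card = Nat.card {C : Fin n → ℕ // (∑ i, C i = t) ∧ p C} := by
  rw [← Nat.card_eq_finsetCard]
  exact Nat.card_congr (Equiv.subtypeEquivRight fun C => by
    simp [Finset.mem_filter, config_iff n t C, and_comm])

lemma card_configs (n t : ℕ) : (configs n t).card = (n + t - 1).choose t := by
  have h : configs n t = (configs n t).filter (fun _ => True) := by simp
  rw [h, filter_card_eq_natCard]
  simpa using sum_card_aux (Fin n) t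

lemma card_Mk {n t : ℕ} (k : ℕ) (hk : k ≤ t) :
    ((configs n t).filter fun C => supC C = k).card
      = n.choose k * (t - 1).choose (t - k) := by
  rw [Finset.card_eq_sum_card_fiberwise
    (f := fun C => Finset.univ.filter fun i => 1 ≤ C i)
    (t := Finset.powersetCard k Finset.univ)
    (fun C hC => by
      rw [Finset.mem_coe, Finset.mem_powersetCard_univ]
      exact (Finset.mem_filter.1 (Finset.mem_coe.1 hC)).2)]
  have hterm : ∀ S ∈ Finset.powersetCard k Finset.univ,
      (((configs n t).filter fun C => supC C = k).filter
        (fun C => (Finset.univ.filter fun i => 1 ≤ C i) = S)).card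
      = (t - 1).choose (t - k) := by
    intro S hS
    rw [Finset.mem_powersetCard_univ] at hS
    have h : (((configs n t).filter fun C => supC C = k).filter
        (fun C => (Finset.univ.filter fun i => 1 ≤ C i) = S))
        = (configs n t).filter (fun C => (Finset.univ.filter fun i => 1 ≤ C i) = S) := by
      ext C
      simp only [Finset.mem_filter, and_assoc]
      simp only [supC]
      constructor
      · rintro ⟨h1, _, h3⟩; exact ⟨h1, h3⟩
      · rintro ⟨h1, h2⟩; exact ⟨h1, by rw [h2, hS], h2⟩
    rw [h, filter_card_eq_natCard, card_fixed_supp S (hS ▸ hk), hS]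
  rw [Finset.sum_congr rfl hterm, Finset.sum_const, Finset.card_powersetCard,
    Finset.card_univ, Fintype.card_fin, smul_eq_mul]

lemma step_ineq {n t s m : ℕ} (hm : m ≤ 2 * s + 1) (ht : 2 * s + 3 ≤ t)
    (H : 2 * (2 * s + 2) * (n + 1) ≤ (t - 2 * s - 1) * (t - 2 * s - 2)) :
    2 * (n.choose (t - m) * (t - 1).choose m)
      ≤ n.choose (t - m - 1) * (t - 1).choose (m + 1) := by
  set k := t - m with hk
  have hk1 : 2 ≤ k := by omega
  by_cases hkn : k ≤ n
  case neg =>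
    have h0 : n.choose k = 0 := Nat.choose_eq_zero_of_lt (by omega)
    simp [h0]
  have h1 : n.choose k * k = n.choose (k - 1) * (n - k + 1) := by
    have h := Nat.choose_succ_right_eq n (k - 1)
    have hkk : k - 1 + 1 = k := by omega
    rw [hkk] at h
    rw [h]
    congr 1
    omega
  have h2 : (t - 1).choose (m + 1) * (m + 1) = (t - 1).choose m * (t - 1 - m) :=
    Nat.choose_succ_right_eq (t - 1) m
  have hnum : 2 * ((m + 1) * (n - k + 1)) ≤ k * (t - 1 - m) := by
    calc 2 * ((m + 1) * (n - k + 1)) ≤ 2 * ((2 * s + 2) * (n + 1)) := by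
          apply Nat.mul_le_mul_left
          apply Nat.mul_le_mul <;> omega
      _ = 2 * (2 * s + 2) * (n + 1) := by ring
      _ ≤ (t - 2 * s - 1) * (t - 2 * s - 2) := H
      _ ≤ k * (t - 1 - m) := Nat.mul_le_mul (by omega) (by omega)
  have key : (2 * (n.choose k * (t - 1).choose m)) * ((m + 1) * (n - k + 1))
      ≤ (n.choose (k - 1) * (t - 1).choose (m + 1)) * ((m + 1) * (n - k + 1)) := by
    calc (2 * (n.choose k * (t - 1).choose m)) * ((m + 1) * (n - k + 1))
        = (n.choose k * (t - 1).choose m) * (2 * ((m + 1) * (n - k + 1))) := by ring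
      _ ≤ (n.choose k * (t - 1).choose m) * (k * (t - 1 - m)) :=
          Nat.mul_le_mul_left _ hnum
      _ = (n.choose k * k) * ((t - 1).choose m * (t - 1 - m)) := by ring
      _ = (n.choose (k - 1) * (n - k + 1)) * ((t - 1).choose (m + 1) * (m + 1)) := by
          rw [h1, h2]
      _ = (n.choose (k - 1) * (t - 1).choose (m + 1)) * ((m + 1) * (n - k + 1)) := by ring
  exact Nat.le_of_mul_le_mul_right key (by positivity)

lemma main_bound (n t s : ℕ) (ht : 2 * s + 3 ≤ t)
    (H : 2 * (2 * s + 2) * (n + 1) ≤ (t - 2 * s - 1) * (t - 2 * s - 2)) :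
    2 ^ (s + 1) * ((configs n t).filter fun C => t - supC C ≤ s).card
      ≤ (configs n t).card := by
  set T := configs n t with hT
  set Mk : ℕ → ℕ := fun v => (T.filter fun C => supC C = v).card with hMk
  have step : ∀ m : ℕ, m ≤ 2 * s + 1 → 2 * Mk (t - m) ≤ Mk (t - m - 1) := by
    intro m hm
    have e1 : t - (t - m) = m := by omega
    have e2 : t - (t - m - 1) = m + 1 := by omega
    rw [hMk]
    dsimp only
    rw [card_Mk (t - m) (by omega), card_Mk (t - m - 1) (by omega), e1, e2]
    exact step_ineq hm ht H
  have iter : ∀ i j : ℕ, j + i ≤ 2 * s + 2 → 2 ^ i * Mk (t - j) ≤ Mk (t - j - i) := by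
    intro i
    induction i with
    | zero => intro j _; simp
    | succ i ih =>
      intro j hj
      have h1 : 2 ^ i * Mk (t - j) ≤ Mk (t - j - i) := ih j (by omega)
      have h2 : 2 * Mk (t - (j + i)) ≤ Mk (t - (j + i) - 1) := step (j + i) (by omega)
      have e : t - (j + i) = t - j - i := by omega
      have e2 : t - (j + i) - 1 = t - j - (i + 1) := by omega
      rw [e2] at h2
      rw [e] at h2
      calc 2 ^ (i + 1) * Mk (t - j) = 2 * (2 ^ i * Mk (t - j)) := by ring
        _ ≤ 2 * Mk (t - j - i) := by omega
        _ ≤ Mk (t - j - (i + 1)) := h2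
  have hsupt : ∀ C ∈ T, supC C ≤ t := fun C hC => by
    have := supC_le C
    rwa [(config_iff n t C).1 hC] at this
  have bad_card : ((T.filter fun C => t - supC C ≤ s)).card
      = ∑ j ∈ Finset.range (s + 1), Mk (t - j) := by
    rw [Finset.card_eq_sum_card_fiberwise
      (f := fun C => t - supC C) (t := Finset.range (s + 1))
      (fun C hC => Finset.mem_range.2 (by
        show t - supC C < s + 1
        have := (Finset.mem_filter.1 hC).2; omega))]
    refine Finset.sum_congr rfl fun j hj => ?_
    rw [Finset.mem_range] at hj
    congr 1
    ext C
    simp only [Finset.mem_filter, and_assoc]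
    constructor
    · rintro ⟨h1, _, h3⟩
      exact ⟨h1, by have := hsupt C h1; omega⟩
    · rintro ⟨h1, h2⟩
      have := hsupt C h1
      exact ⟨h1, by omega, by omega⟩
  have good_card : ∑ j ∈ Finset.range (s + 1), Mk (t - j - (s + 1)) ≤ T.card := by
    have hdisj : ∀ x ∈ Finset.range (s + 1), ∀ y ∈ Finset.range (s + 1), x ≠ y →
        Disjoint (T.filter fun C => supC C = t - x - (s + 1))
          (T.filter fun C => supC C = t - y - (s + 1)) := by
      intro x hx y hy hxy
      rw [Finset.mem_range] at hx hy
      rw [Finset.disjoint_left]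
      intro C hCx hCy
      have h1 := (Finset.mem_filter.1 hCx).2
      have h2 := (Finset.mem_filter.1 hCy).2
      omega
    calc ∑ j ∈ Finset.range (s + 1), Mk (t - j - (s + 1))
        = ((Finset.range (s + 1)).biUnion
            (fun j => T.filter fun C => supC C = t - j - (s + 1))).card :=
          (Finset.card_biUnion hdisj).symm
      _ ≤ T.card := Finset.card_le_card (Finset.biUnion_subset.2
          (fun j _ => Finset.filter_subset _ _))
  calc 2 ^ (s + 1) * ((T.filter fun C => t - supC C ≤ s)).card
      = ∑ j ∈ Finset.range (s + 1), 2 ^ (s + 1) * Mk (t - j) := by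
        rw [bad_card, Finset.mul_sum]
    _ ≤ ∑ j ∈ Finset.range (s + 1), Mk (t - j - (s + 1)) :=
        Finset.sum_le_sum fun j hj => iter (s + 1) j (by
          have := Finset.mem_range.1 hj; omega)
    _ ≤ T.card := good_card

lemma ev_rpow_ge (c : ℝ) (e : ℝ) (he : 0 < e) :
    ∀ᶠ n : ℕ in Filter.atTop, c ≤ (n : ℝ) ^ e :=
  ((tendsto_rpow_atTop he).comp tendsto_natCast_atTop_atTop).eventually_ge_atTop c

lemma evH : ∀ᶠ n : ℕ in Filter.atTop,
    1 ≤ n ∧ 2 * ⌊(n : ℝ) ^ (0.55 : ℝ)⌋₊ + 3 ≤ ⌊(n : ℝ) ^ (0.8 : ℝ)⌋₊ ∧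
      2 * (2 * ⌊(n : ℝ) ^ (0.55 : ℝ)⌋₊ + 2) * (n + 1)
        ≤ (⌊(n : ℝ) ^ (0.8 : ℝ)⌋₊ - 2 * ⌊(n : ℝ) ^ (0.55 : ℝ)⌋₊ - 1)
          * (⌊(n : ℝ) ^ (0.8 : ℝ)⌋₊ - 2 * ⌊(n : ℝ) ^ (0.55 : ℝ)⌋₊ - 2) := by
  filter_upwards [Filter.eventually_ge_atTop 1, ev_rpow_ge 64 0.05 (by norm_num),
    ev_rpow_ge 10 0.25 (by norm_num), ev_rpow_ge 1 0.55 (by norm_num)]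
    with n hn1 hc hA hb1
  set s := ⌊(n : ℝ) ^ (0.55 : ℝ)⌋₊ with hs
  set t := ⌊(n : ℝ) ^ (0.8 : ℝ)⌋₊ with htdef
  have hn0 : (0 : ℝ) < n := by exact_mod_cast hn1
  have hn1' : (1 : ℝ) ≤ n := by exact_mod_cast hn1
  set a := (n : ℝ) ^ (0.8 : ℝ) with ha
  set b := (n : ℝ) ^ (0.55 : ℝ) with hb
  set A := (n : ℝ) ^ (0.25 : ℝ) with hA'
  set c0 := (n : ℝ) ^ (0.05 : ℝ) with hc0
  have eq1 : b * A = a := by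
    rw [hb, hA', ha, ← Real.rpow_add hn0]; norm_num
  have eqA : A * A = (n : ℝ) ^ (0.5 : ℝ) := by
    rw [hA', ← Real.rpow_add hn0]; norm_num
  have eqb5 : b * (n : ℝ) ^ (0.5 : ℝ) = c0 * n := by
    have h1 : (n : ℝ) ^ (0.05 : ℝ) * (n : ℝ) ^ (1 : ℝ) = (n : ℝ) ^ (1.05 : ℝ) := by
      rw [← Real.rpow_add hn0]; norm_num
    have h2 : (n : ℝ) ^ (0.55 : ℝ) * (n : ℝ) ^ (0.5 : ℝ) = (n : ℝ) ^ (1.05 : ℝ) := by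
      rw [← Real.rpow_add hn0]; norm_num
    rw [Real.rpow_one] at h1
    rw [hb, hc0]
    linarith
  have hsb : (s : ℝ) ≤ b := Nat.floor_le (by positivity)
  have hta : a - 1 < (t : ℝ) := by
    have := Nat.lt_floor_add_one a
    rw [← htdef] at this
    linarith
  have ha4b : 4 * b + 6 ≤ a := by nlinarith
  have hts : 2 * s + 3 ≤ t := by
    have h : ((2 * s + 3 : ℕ) : ℝ) < (t : ℝ) + 1 := by push_cast; nlinarith
    have := Nat.cast_lt (α := ℝ) |>.1
      (by push_cast at h ⊢; linarith : ((2 * s + 3 : ℕ) : ℝ) < ((t + 1 : ℕ) : ℝ))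
    omega
  refine ⟨hn1, hts, ?_⟩
  have hcast1 : ((t - 2 * s - 1 : ℕ) : ℝ) = (t : ℝ) - 2 * (s : ℝ) - 1 := by
    have e : t - 2 * s - 1 = t - (2 * s + 1) := by omega
    rw [e, Nat.cast_sub (by omega)]; push_cast; ring
  have hcast2 : ((t - 2 * s - 2 : ℕ) : ℝ) = (t : ℝ) - 2 * (s : ℝ) - 2 := by
    have e : t - 2 * s - 2 = t - (2 * s + 2) := by omega
    rw [e, Nat.cast_sub (by omega)]; push_cast; ring
  rw [← Nat.cast_le (α := ℝ)]
  push_cast [hcast1, hcast2]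
  have h1 : a / 2 ≤ (t : ℝ) - 2 * s - 1 := by linarith
  have h2 : a / 2 ≤ (t : ℝ) - 2 * s - 2 := by linarith
  have eaa : a * a = (b * n) * c0 := by
    calc a * a = (b * A) * (b * A) := by rw [eq1]
      _ = (b * b) * (A * A) := by ring
      _ = b * (b * ((n : ℝ) ^ (0.5 : ℝ))) := by rw [eqA]; ring
      _ = b * (c0 * n) := by rw [eqb5]
      _ = (b * n) * c0 := by ring
  have hbn0 : (0 : ℝ) ≤ b * n := by positivity
  have hbig : 16 * (b * n) ≤ (a / 2) * (a / 2) := by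
    have := mul_le_mul_of_nonneg_left hc hbn0
    calc 16 * (b * n) = (b * n) * 64 / 4 := by ring
      _ ≤ (b * n) * c0 / 4 := by linarith
      _ = a * a / 4 := by rw [eaa]
      _ = (a / 2) * (a / 2) := by ring
  have hL : 2 * (2 * (s : ℝ) + 2) * ((n : ℝ) + 1) ≤ 16 * (b * n) := by
    have e1 : 2 * (s : ℝ) + 2 ≤ 4 * b := by linarith
    have e2 : (n : ℝ) + 1 ≤ 2 * n := by linarith
    have e3 : (2 * (s : ℝ) + 2) * ((n : ℝ) + 1) ≤ (4 * b) * (2 * n) :=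
      mul_le_mul e1 e2 (by positivity) (by positivity)
    calc 2 * (2 * (s : ℝ) + 2) * ((n : ℝ) + 1)
        = 2 * ((2 * (s : ℝ) + 2) * ((n : ℝ) + 1)) := by ring
      _ ≤ 2 * ((4 * b) * (2 * n)) := by linarith
      _ = 16 * (b * n) := by ring
  have hprod := mul_le_mul h1 h2 (by positivity) (by linarith)
  linarith

/-- With `t = ⌊n^{0.8}⌋`, the proportion of configurations of `t`
pebbles on `n` vertices whose number of birthdays `B(C) = t - #{i : C i ≥ 1}` is at
most `n^{0.55}` tends to `0` as `n → ∞`. -/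
theorem few_birthdays_proportion_tendsto_zero :
    Filter.Tendsto (fun n : ℕ =>
      (Nat.card {C : Fin n → ℕ // (∑ i, C i = ⌊(n : ℝ) ^ (0.8 : ℝ)⌋₊) ∧
          ((⌊(n : ℝ) ^ (0.8 : ℝ)⌋₊ - (Finset.univ.filter fun i => 1 ≤ C i).card : ℕ) : ℝ)
            ≤ (n : ℝ) ^ (0.55 : ℝ)} : ℝ) /
        (Nat.choose (n + ⌊(n : ℝ) ^ (0.8 : ℝ)⌋₊ - 1) ⌊(n : ℝ) ^ (0.8 : ℝ)⌋₊ : ℝ))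
      Filter.atTop (nhds 0) := by
  have hsq : Filter.Tendsto (fun n : ℕ => ((1 : ℝ) / 2) ^ ⌊(n : ℝ) ^ (0.55 : ℝ)⌋₊)
      Filter.atTop (nhds 0) := by
    have hfloor : Filter.Tendsto (fun n : ℕ => ⌊(n : ℝ) ^ (0.55 : ℝ)⌋₊)
        Filter.atTop Filter.atTop :=
      tendsto_nat_floor_atTop.comp
        ((tendsto_rpow_atTop (by norm_num)).comp tendsto_natCast_atTop_atTop)
    exact (tendsto_pow_atTop_nhds_zero_of_lt_one (by norm_num) (by norm_num)).comp hfloor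
  refine tendsto_of_tendsto_of_tendsto_of_le_of_le' tendsto_const_nhds hsq
    (Filter.Eventually.of_forall fun n => by positivity) ?_
  filter_upwards [evH] with n hn
  obtain ⟨hn1, hts, H⟩ := hn
  set t := ⌊(n : ℝ) ^ (0.8 : ℝ)⌋₊ with htdef
  set s := ⌊(n : ℝ) ^ (0.55 : ℝ)⌋₊ with hsdef
  clear_value t s
  have hT0 : 0 < (configs n t).card := by
    have h1 : t ≤ n + t - 1 := by omega
    rw [card_configs n t]
    exact Nat.choose_pos h1
  -- identify the numerator with a finset cardinality
  have hnum : Nat.card {C : Fin n → ℕ // (∑ i, C i = t) ∧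
        ((t - (Finset.univ.filter fun i => 1 ≤ C i).card : ℕ) : ℝ) ≤ (n : ℝ) ^ (0.55 : ℝ)}
      = ((configs n t).filter fun C => t - supC C ≤ s).card := by
    rw [filter_card_eq_natCard]
    refine Nat.card_congr (Equiv.subtypeEquivRight fun C => ?_)
    have : ((t - (Finset.univ.filter fun i => 1 ≤ C i).card : ℕ) : ℝ) ≤ (n : ℝ) ^ (0.55 : ℝ)
        ↔ t - supC C ≤ s := by
      rw [hsdef]
      exact (Nat.le_floor_iff (by positivity)).symm
    rw [this]
  rw [hnum]
  have key := main_bound n t s hts H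
  have hT0R : (0 : ℝ) < ((configs n t).card : ℝ) := by exact_mod_cast hT0
  have keyR : (2 : ℝ) ^ (s + 1) * (((configs n t).filter fun C => t - supC C ≤ s).card : ℝ)
      ≤ ((configs n t).card : ℝ) := by exact_mod_cast key
  have hBad0 : (0 : ℝ) ≤ (((configs n t).filter fun C => t - supC C ≤ s).card : ℝ) := by
    positivity
  have hchoose : ((Nat.choose (n + t - 1) t : ℕ) : ℝ) = ((configs n t).card : ℝ) := by
    rw [card_configs n t]
  rw [hchoose, div_le_iff₀ hT0R]
  have hpow : ((1 : ℝ) / 2) ^ s * (2 : ℝ) ^ (s + 1) = 2 := by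
    rw [pow_succ, ← mul_assoc, ← mul_pow]
    norm_num
  have h3 := mul_le_mul_of_nonneg_left keyR
    (show (0 : ℝ) ≤ ((1 : ℝ) / 2) ^ s by positivity)
  have h4 : ((1 : ℝ) / 2) ^ s * ((2 : ℝ) ^ (s + 1)
      * (((configs n t).filter fun C => t - supC C ≤ s).card : ℝ))
      = 2 * (((configs n t).filter fun C => t - supC C ≤ s).card : ℝ) := by
    rw [← mul_assoc, hpow]
  linarith
end

section
/- For every real ε with 0 < ε < 1/2, with t = t(n) = ⌈n^{1/2+ε}⌉, the proportion, among all C(n+t−1, t) configurations of t pebbles on n vertices, of those configurations whose number of birthdays B(C) is at most n^{ε}, tends to 0 as n → ∞. -/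
open Finset

namespace FB
variable {n t : ℕ}

def occ {n : ℕ} (C : Fin n → ℕ) : ℕ := #(univ.filter fun i => 1 ≤ C i)

lemma mem_configs {C : Fin n → ℕ} (h : ∑ i, C i = t) : C ∈ configs n t := by
  simp only [configs, mem_filter, Fintype.mem_piFinset, mem_range]
  exact ⟨fun i => Nat.lt_succ_of_le
    (h ▸ Finset.single_le_sum (fun _ _ => Nat.zero_le _) (mem_univ i)), h⟩

lemma sum_of_mem {C : Fin n → ℕ} (h : C ∈ configs n t) : ∑ i, C i = t :=
  (mem_filter.1 h).2

lemma occ_le_sum (C : Fin n → ℕ) : occ C ≤ ∑ i, C i := by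
  calc occ C = ∑ i ∈ univ.filter fun i => 1 ≤ C i, 1 := by simp [occ]
    _ ≤ ∑ i ∈ univ.filter fun i => 1 ≤ C i, C i :=
        Finset.sum_le_sum fun i hi => (mem_filter.1 hi).2
    _ ≤ ∑ i, C i := Finset.sum_le_sum_of_subset (filter_subset _ _)

def pmove (C : Fin n → ℕ) (v u : Fin n) : Fin n → ℕ :=
  Function.update (Function.update C u (C u + 1)) v 0

lemma pmove_apply (C : Fin n → ℕ) (v u w : Fin n) :
    pmove C v u w = if w = v then 0 else if w = u then C u + 1 else C w := by
  simp only [pmove, Function.update]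
  split_ifs <;> simp_all

lemma sum_pmove {C : Fin n → ℕ} {v u : Fin n} (hvu : v ≠ u) (hv : C v = 1) :
    ∑ w, pmove C v u w = ∑ w, C w := by
  have h1 : ∑ w, pmove C v u w = 0 + ∑ w ∈ univ \ {v}, Function.update C u (C u + 1) w :=
    Finset.sum_update_of_mem (mem_univ v) _ _
  have hu : u ∈ univ \ {v} := by simp [hvu.symm, Ne.symm hvu]
  have h2 : ∑ w ∈ univ \ {v}, Function.update C u (C u + 1) w
      = (C u + 1) + ∑ w ∈ (univ \ {v}) \ {u}, C w := Finset.sum_update_of_mem hu _ _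
  have h3 : C u + ∑ w ∈ (univ \ {v}).erase u, C w = ∑ w ∈ univ \ {v}, C w :=
    Finset.add_sum_erase _ _ hu
  have h4 : C v + ∑ w ∈ univ.erase v, C w = ∑ w, C w := Finset.add_sum_erase _ _ (mem_univ v)
  have e1 : (univ \ {v} : Finset (Fin n)) \ {u} = (univ \ {v}).erase u := by
    ext; simp [and_comm]
  have e2 : (univ \ {v} : Finset (Fin n)) = univ.erase v := by ext; simp
  rw [h1, h2, e1, e2]
  rw [e2] at h3
  omega

lemma filter_pmove {C : Fin n → ℕ} {v u : Fin n} (hvu : v ≠ u) (hu : 1 ≤ C u) :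
    (univ.filter fun i => 1 ≤ pmove C v u i) = (univ.filter fun i => 1 ≤ C i).erase v := by
  ext i
  simp only [mem_filter, mem_univ, true_and, mem_erase, pmove_apply]
  rcases eq_or_ne i v with rfl | hiv
  · simp
  rcases eq_or_ne i u with rfl | hiu
  · simp [hiv, hu]
  · simp [hiv, hiu]

lemma occ_pmove {C : Fin n → ℕ} {v u : Fin n} (hvu : v ≠ u) (hv : C v = 1) (hu : 1 ≤ C u) :
    occ (pmove C v u) = occ C - 1 := by
  rw [occ, filter_pmove hvu hu, Finset.card_erase_of_mem]
  · rfl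
  · simp [hv]

/-- the merge relation: move a pebble from a singleton vertex onto another occupied vertex -/
def merge (C C' : Fin n → ℕ) : Prop :=
  ∃ v u, v ≠ u ∧ C v = 1 ∧ 1 ≤ C u ∧ C' = pmove C v u

/-- configs with exactly `s` occupied vertices -/
def level (n t s : ℕ) : Finset (Fin n → ℕ) := (configs n t).filter fun C => occ C = s


open scoped Classical

lemma two_mul_occ_le {C : Fin n → ℕ} (hC : C ∈ configs n t) :
    2 * occ C ≤ t + #(univ.filter fun v => C v = 1) := by
  set A := univ.filter fun v => C v = 1 with hA
  set B := univ.filter fun u => 1 ≤ C u with hB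
  have key : ∑ i ∈ B, 2 ≤ ∑ i ∈ B, (C i + if C i = 1 then 1 else 0) := by
    refine Finset.sum_le_sum fun i hi => ?_
    have : 1 ≤ C i := (mem_filter.1 hi).2
    split_ifs <;> omega
  have h1 : ∑ i ∈ B, (C i + if C i = 1 then 1 else 0)
      = (∑ i ∈ B, C i) + #(B.filter fun i => C i = 1) := by
    rw [Finset.sum_add_distrib, Finset.sum_boole]
    simp
  have h2 : #(B.filter fun i => C i = 1) = #A := by
    congr 1
    ext i; simp only [hA, hB, mem_filter, mem_univ, true_and]; omega
  have h3 : ∑ i ∈ B, C i ≤ ∑ i, C i :=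
    Finset.sum_le_sum_of_subset (filter_subset _ _)
  have h4 : ∑ i ∈ B, (2:ℕ) = 2 * #B := by rw [Finset.sum_const]; ring
  have h5 : ∑ i, C i = t := sum_of_mem hC
  have : occ C = #B := rfl
  omega

lemma twos_le {C : Fin n → ℕ} (hC : C ∈ configs n t) :
    occ C + #(univ.filter fun u => 2 ≤ C u) ≤ t := by
  set B := univ.filter fun u => 1 ≤ C u with hB
  have key : ∑ i ∈ B, ((1:ℕ) + if 2 ≤ C i then 1 else 0) ≤ ∑ i ∈ B, C i := by
    refine Finset.sum_le_sum fun i hi => ?_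
    have : 1 ≤ C i := (mem_filter.1 hi).2
    split_ifs <;> omega
  have h1 : ∑ i ∈ B, ((1:ℕ) + if 2 ≤ C i then 1 else 0)
      = #B + #(B.filter fun i => 2 ≤ C i) := by
    rw [Finset.sum_add_distrib, Finset.sum_boole]
    simp
  have h2 : #(B.filter fun i => 2 ≤ C i) = #(univ.filter fun u => 2 ≤ C u) := by
    congr 1
    ext i; simp only [hB, mem_filter, mem_univ, true_and]; omega
  have h3 : ∑ i ∈ B, C i ≤ ∑ i, C i :=
    Finset.sum_le_sum_of_subset (filter_subset _ _)
  have h5 : ∑ i, C i = t := sum_of_mem hC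
  have : occ C = #B := rfl
  omega

lemma pmove_mem_level {C : Fin n → ℕ} {v u : Fin n} (hC : C ∈ level n t s)
    (hvu : v ≠ u) (hv : C v = 1) (hu : 1 ≤ C u) :
    pmove C v u ∈ level n t (s - 1) := by
  obtain ⟨hC1, hC2⟩ := mem_filter.1 hC
  refine mem_filter.2 ⟨mem_configs ?_, ?_⟩
  · rw [sum_pmove hvu hv, sum_of_mem hC1]
  · rw [occ_pmove hvu hv hu, hC2]

lemma forward_step {s : ℕ} (hs : 1 ≤ s) {C : Fin n → ℕ} (hC : C ∈ level n t s) :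
    (2 * s - t) * (s - 1) ≤ #((level n t (s-1)).bipartiteAbove merge C) := by
  obtain ⟨hC1, hC2⟩ := mem_filter.1 hC
  set A := univ.filter fun v => C v = 1 with hA
  set B := univ.filter fun u => 1 ≤ C u with hB
  set P := (A ×ˢ B).filter fun p => p.1 ≠ p.2 with hP
  have hBs : #B = s := hC2
  -- #P ≥ #A * (s - 1)
  have hsplit : #((A ×ˢ B).filter fun p => p.1 = p.2) + #P = #(A ×ˢ B) := by
    rw [hP]
    exact Finset.card_filter_add_card_filter_not _
  have hdiag : #((A ×ˢ B).filter fun p => p.1 = p.2) ≤ #A := by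
    refine Finset.card_le_card_of_injOn Prod.fst (fun p hp => ?_) ?_
    · exact (Finset.mem_product.1 (mem_filter.1 hp).1).1
    · intro p hp q hq h
      have hp' := (mem_filter.1 (by exact_mod_cast hp : p ∈ _)).2
      have hq' := (mem_filter.1 (by exact_mod_cast hq : q ∈ _)).2
      exact Prod.ext h (by rw [← hp', ← hq', h])
  have hprod : #(A ×ˢ B) = #A * s := by rw [Finset.card_product, hBs]
  have hmulsub : #A * s = #A * (s - 1) + #A := by
    conv_lhs => rw [show s = (s-1) + 1 by omega]
    ring
  have hPcard : #A * (s - 1) ≤ #P := by omega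
  have hAge : 2 * s - t ≤ #A := by
    have := two_mul_occ_le hC1
    rw [← hA] at this
    have : 2 * occ C ≤ t + #A := this
    rw [hC2] at this
    omega
  -- injection from P into bipartiteAbove
  have hinj : #P ≤ #((level n t (s-1)).bipartiteAbove merge C) := by
    refine Finset.card_le_card_of_injOn (fun p => pmove C p.1 p.2) (fun p hp => ?_) ?_
    · obtain ⟨hp1, hp2⟩ := mem_filter.1 hp
      obtain ⟨hpv, hpu⟩ := Finset.mem_product.1 hp1
      have hv : C p.1 = 1 := (mem_filter.1 hpv).2
      have hu : 1 ≤ C p.2 := (mem_filter.1 hpu).2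
      refine (Finset.mem_bipartiteAbove _).2 ⟨pmove_mem_level hC hp2 hv hu, p.1, p.2, hp2, hv, hu, rfl⟩
    · intro p hp q hq h
      rw [Finset.mem_coe] at hp hq
      obtain ⟨hp1, hp2⟩ := mem_filter.1 hp
      obtain ⟨hpv, hpu⟩ := Finset.mem_product.1 hp1
      obtain ⟨hq1, hq2⟩ := mem_filter.1 hq
      obtain ⟨hqv, hqu⟩ := Finset.mem_product.1 hq1
      have hv : C p.1 = 1 := (mem_filter.1 hpv).2
      have hu : 1 ≤ C p.2 := (mem_filter.1 hpu).2
      have hv' : C q.1 = 1 := (mem_filter.1 hqv).2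
      have hu' : 1 ≤ C q.2 := (mem_filter.1 hqu).2
      have h1 : p.1 = q.1 := by
        by_contra hne
        have e1 := congrFun h p.1
        simp only at e1
        rw [pmove_apply, pmove_apply, if_pos rfl, if_neg hne] at e1
        split_ifs at e1 <;> omega
      have h2 : p.2 = q.2 := by
        by_contra hne
        have e1 := congrFun h p.2
        simp only at e1
        rw [pmove_apply, pmove_apply, if_neg (Ne.symm hp2), if_pos rfl, ← h1,
          if_neg (Ne.symm hp2), if_neg hne] at e1
        omega
      exact Prod.ext h1 h2
  calc (2 * s - t) * (s - 1) ≤ #A * (s - 1) := Nat.mul_le_mul_right _ hAge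
    _ ≤ #P := hPcard
    _ ≤ _ := hinj

lemma pmove_recon {C C' : Fin n → ℕ} {v u : Fin n} (hvu : v ≠ u) (hv : C v = 1)
    (heq : C' = pmove C v u) :
    C = fun w => if w = v then 1 else if w = u then C' u - 1 else C' w := by
  funext w
  have hw := congrFun heq w
  have hu' := congrFun heq u
  rw [pmove_apply] at hw hu'
  rw [if_neg (Ne.symm hvu), if_pos rfl] at hu'
  split_ifs with h1 h2
  · rw [h1, hv]
  · rw [h2]; omega
  · rw [hw, if_neg h1, if_neg h2]

lemma backward_step {s : ℕ} (hs : 1 ≤ s) {C' : Fin n → ℕ} (hC' : C' ∈ level n t (s-1)) :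
    #((level n t s).bipartiteBelow merge C') ≤ n * (t - s + 1) := by
  obtain ⟨hC1, hC2⟩ := mem_filter.1 hC'
  set S := (level n t s).bipartiteBelow merge C' with hS
  set Q := (univ.filter fun v => C' v = 0) ×ˢ (univ.filter fun u => 2 ≤ C' u) with hQ
  have hcard : #S ≤ #Q := by
    refine Finset.card_le_card_of_surjOn
      (fun p => fun w => if w = p.1 then 1 else if w = p.2 then C' p.2 - 1 else C' w) ?_
    intro C hC
    rw [Finset.mem_coe] at hC
    have hm : merge C C' := ((Finset.mem_bipartiteBelow _).1 hC).2
    obtain ⟨v, u, hvu, hv, hu, heq⟩ := hm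
    have h1 := congrFun heq v
    have h2 := congrFun heq u
    rw [pmove_apply, if_pos rfl] at h1
    rw [pmove_apply, if_neg (Ne.symm hvu), if_pos rfl] at h2
    refine ⟨(v, u), ?_, ?_⟩
    · rw [hQ]
      exact Finset.mem_coe.2 (Finset.mem_product.2
        ⟨mem_filter.2 ⟨mem_univ _, h1⟩, mem_filter.2 ⟨mem_univ _, by show 2 ≤ C' u; omega⟩⟩)
    · exact (pmove_recon hvu hv heq).symm
  have h1 : #(univ.filter fun v => C' v = 0) ≤ n := by
    calc #(univ.filter fun v => C' v = 0) ≤ #(univ : Finset (Fin n)) :=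
          Finset.card_filter_le _ _
      _ = n := by simp
  have h2 : #(univ.filter fun u => 2 ≤ C' u) ≤ t - s + 1 := by
    have := twos_le hC1
    rw [hC2] at this
    omega
  calc #S ≤ #Q := hcard
    _ = _ * _ := Finset.card_product _ _
    _ ≤ n * (t - s + 1) := Nat.mul_le_mul h1 h2

lemma step {s : ℕ} (hs : 1 ≤ s) :
    #(level n t s) * ((2 * s - t) * (s - 1)) ≤ #(level n t (s-1)) * (n * (t - s + 1)) :=
  Finset.card_mul_le_card_mul merge (fun _ hC => forward_step hs hC)
    (fun _ hC' => backward_step hs hC')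

lemma level_card_le {s b : ℕ} (hsb : t - b ≤ s) (hst : s ≤ t) :
    #(level n t s) * ((t - 2*b - 2) * (t - b - 2)) ^ 2
      ≤ #(configs n t) * (n * (b + 2)) ^ 2 := by
  set m := (t - 2*b - 2) * (t - b - 2) with hm
  set M := n * (b + 2) with hM
  rcases le_or_gt t (2*b + 2) with ht | ht
  · have : t - 2*b - 2 = 0 := by omega
    rw [hm, this, zero_mul]
    simp
  -- now t ≥ 2b + 3, so s ≥ t - b ≥ b + 3 ≥ 3
  have hs3 : 3 ≤ s := by omega
  have step1 := step (n := n) (t := t) (s := s) (by omega)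
  have step2 := step (n := n) (t := t) (s := s - 1) (by omega)
  rw [show s - 1 - 1 = s - 2 by omega] at step2
  have hm1 : m ≤ (2 * s - t) * (s - 1) :=
    Nat.mul_le_mul (by omega) (by omega)
  have hm2 : m ≤ (2 * (s - 1) - t) * (s - 1 - 1) :=
    Nat.mul_le_mul (by omega) (by omega)
  have hM1 : n * (t - s + 1) ≤ M := Nat.mul_le_mul_left _ (by omega)
  have hM2 : n * (t - (s - 1) + 1) ≤ M := Nat.mul_le_mul_left _ (by omega)
  have hsub : #(level n t (s - 2)) ≤ #(configs n t) :=
    Finset.card_le_card (filter_subset _ _)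
  calc #(level n t s) * m ^ 2 = (#(level n t s) * m) * m := by ring
    _ ≤ (#(level n t s) * ((2 * s - t) * (s - 1))) * m :=
        Nat.mul_le_mul_right _ (Nat.mul_le_mul_left _ hm1)
    _ ≤ (#(level n t (s-1)) * (n * (t - s + 1))) * m := Nat.mul_le_mul_right _ step1
    _ ≤ (#(level n t (s-1)) * M) * m := Nat.mul_le_mul_right _ (Nat.mul_le_mul_left _ hM1)
    _ = (#(level n t (s-1)) * m) * M := by ring
    _ ≤ (#(level n t (s-1)) * ((2 * (s-1) - t) * (s - 1 - 1))) * M :=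
        Nat.mul_le_mul_right _ (Nat.mul_le_mul_left _ hm2)
    _ ≤ (#(level n t (s-2)) * (n * (t - (s-1) + 1))) * M := Nat.mul_le_mul_right _ step2
    _ ≤ (#(configs n t) * M) * M :=
        Nat.mul_le_mul_right _ (Nat.mul_le_mul hsub hM2)
    _ = #(configs n t) * M ^ 2 := by ring

lemma bad_card_le (n t b : ℕ) :
    #((configs n t).filter fun C => t - occ C ≤ b) * ((t - 2*b - 2) * (t - b - 2)) ^ 2
      ≤ (b + 1) * (#(configs n t) * (n * (b + 2)) ^ 2) := by
  set Bad := (configs n t).filter fun C => t - occ C ≤ b with hBad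
  have hocc : ∀ C ∈ configs n t, occ C ≤ t := by
    intro C hC
    have := occ_le_sum C
    rw [sum_of_mem hC] at this
    exact this
  have hfib : #Bad = ∑ j ∈ Finset.range (b+1), #(Bad.filter fun C => t - occ C = j) :=
    Finset.card_eq_sum_card_fiberwise fun C hC =>
      Finset.mem_range.2 (Nat.lt_succ_of_le (mem_filter.1 hC).2)
  have hfiber : ∀ j ∈ Finset.range (b+1),
      #(Bad.filter fun C => t - occ C = j) * ((t - 2*b - 2) * (t - b - 2)) ^ 2
        ≤ #(configs n t) * (n * (b + 2)) ^ 2 := by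
    intro j hj
    have hj' : j ≤ b := Nat.lt_succ_iff.1 (Finset.mem_range.1 hj)
    have hsub : Bad.filter (fun C => t - occ C = j) ⊆ level n t (t - j) := by
      intro C hC
      obtain ⟨hC1, hC2⟩ := mem_filter.1 hC
      obtain ⟨hC3, hC4⟩ := mem_filter.1 hC1
      refine mem_filter.2 ⟨hC3, ?_⟩
      have := hocc C hC3
      omega
    calc #(Bad.filter fun C => t - occ C = j) * ((t - 2*b - 2) * (t - b - 2)) ^ 2
        ≤ #(level n t (t - j)) * ((t - 2*b - 2) * (t - b - 2)) ^ 2 :=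
          Nat.mul_le_mul_right _ (Finset.card_le_card hsub)
      _ ≤ #(configs n t) * (n * (b + 2)) ^ 2 :=
          level_card_le (by omega) (by omega)
  calc #Bad * ((t - 2*b - 2) * (t - b - 2)) ^ 2
      = ∑ j ∈ Finset.range (b+1),
          #(Bad.filter fun C => t - occ C = j) * ((t - 2*b - 2) * (t - b - 2)) ^ 2 := by
        rw [hfib, Finset.sum_mul]
    _ ≤ ∑ _j ∈ Finset.range (b+1), #(configs n t) * (n * (b + 2)) ^ 2 :=
        Finset.sum_le_sum hfiber
    _ = (b + 1) * (#(configs n t) * (n * (b + 2)) ^ 2) := by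
        rw [Finset.sum_const, Finset.card_range, smul_eq_mul]

lemma card_finsum {ι α : Type*} (s : Finset ι) (f : ι → Multiset α) :
    Multiset.card (∑ i ∈ s, f i) = ∑ i ∈ s, Multiset.card (f i) := by
  induction s using Finset.cons_induction with
  | empty => simp
  | cons a s ha ih => rw [Finset.sum_cons, Finset.sum_cons, Multiset.card_add, ih]

lemma toMultiset_card (C : Fin n → ℕ) :
    Multiset.card (∑ i, C i • ({i} : Multiset (Fin n))) = ∑ i, C i := by
  rw [card_finsum]
  simp

lemma toMultiset_count (C : Fin n → ℕ) (j : Fin n) :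
    Multiset.count j (∑ i, C i • ({i} : Multiset (Fin n))) = C j := by
  rw [Multiset.count_sum']
  have : ∀ i, Multiset.count j (C i • ({i} : Multiset (Fin n)))
      = if j = i then C i else 0 := by
    intro i
    rw [Multiset.count_nsmul, Multiset.count_singleton]
    by_cases h : j = i <;> simp [h]
  rw [Finset.sum_congr rfl fun i _ => this i, Finset.sum_ite_eq univ j]
  simp

lemma configs_card_le (n t : ℕ) : #(configs n t) ≤ (n + t - 1).choose t := by
  rcases (configs n t).eq_empty_or_nonempty with he | ⟨C₀, h₀⟩
  · rw [he]; simp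
  have hcard₀ : Multiset.card (∑ i, C₀ i • ({i} : Multiset (Fin n))) = t := by
    rw [toMultiset_card, sum_of_mem h₀]
  have key : #(configs n t) ≤ #(univ : Finset (Sym (Fin n) t)) := by
    refine Finset.card_le_card_of_injOn
      (fun C => if h : Multiset.card (∑ i, C i • ({i} : Multiset (Fin n))) = t
        then (⟨_, h⟩ : Sym (Fin n) t) else ⟨_, hcard₀⟩)
      (fun _ _ => mem_univ _) ?_
    intro C₁ h₁ C₂ h₂ h
    rw [Finset.mem_coe] at h₁ h₂
    have hc₁ : Multiset.card (∑ i, C₁ i • ({i} : Multiset (Fin n))) = t := by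
      rw [toMultiset_card, sum_of_mem h₁]
    have hc₂ : Multiset.card (∑ i, C₂ i • ({i} : Multiset (Fin n))) = t := by
      rw [toMultiset_card, sum_of_mem h₂]
    beta_reduce at h
    have e1 : (if h : Multiset.card (∑ i, C₁ i • ({i} : Multiset (Fin n))) = t
        then (⟨_, h⟩ : Sym (Fin n) t) else ⟨_, hcard₀⟩) = ⟨_, hc₁⟩ := dif_pos hc₁
    have e2 : (if h : Multiset.card (∑ i, C₂ i • ({i} : Multiset (Fin n))) = t
        then (⟨_, h⟩ : Sym (Fin n) t) else ⟨_, hcard₀⟩) = ⟨_, hc₂⟩ := dif_pos hc₂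
    replace h : ∑ i, C₁ i • ({i} : Multiset (Fin n)) = ∑ i, C₂ i • ({i} : Multiset (Fin n)) :=
      congrArg (fun s : Sym (Fin n) t => (s : Multiset (Fin n))) (e1.symm.trans (h.trans e2))
    funext j
    rw [← toMultiset_count C₁ j, ← toMultiset_count C₂ j, h]
  calc #(configs n t) ≤ #(univ : Finset (Sym (Fin n) t)) := key
    _ = Fintype.card (Sym (Fin n) t) := rfl
    _ = (n + t - 1).choose t := by rw [Sym.card_sym_eq_choose, Fintype.card_fin]

end FB

set_option maxHeartbeats 1000000 in
lemma FB_analytic_bound {N t b D n : ℕ} {x y : ℝ}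
    (h8 : 8 ≤ x) (hy : 1 ≤ y) (hxx : x * x = (n : ℝ))
    (hby : (b : ℝ) ≤ y) (htT : x * y ≤ (t : ℝ)) (hD : 0 < D)
    (master : N * ((t - 2*b - 2) * (t - b - 2)) ^ 2
      ≤ (b + 1) * (D * (n * (b + 2)) ^ 2)) :
    (N : ℝ) / (D : ℝ) ≤ 288 / y := by
  have hx0 : (0:ℝ) < x := by linarith
  have hy0 : (0:ℝ) < y := by linarith
  have hn0 : (0:ℝ) ≤ (n:ℝ) := Nat.cast_nonneg n
  have hkey : 2*(b:ℝ) + 2 ≤ x*y/2 := by nlinarith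
  have hb2t : 2*b + 2 ≤ t := by
    have h1 : (2*(b:ℝ)+2) ≤ (t:ℝ) := by nlinarith
    exact_mod_cast h1
  have hm1 : x*y/2 ≤ ((t - 2*b - 2 : ℕ) : ℝ) := by
    rw [show t - 2*b - 2 = t - (2*b+2) by omega, Nat.cast_sub hb2t]
    push_cast
    linarith
  have hm2 : x*y/2 ≤ ((t - b - 2 : ℕ) : ℝ) := by
    rw [show t - b - 2 = t - (b+2) by omega, Nat.cast_sub (by omega)]
    push_cast
    linarith
  have masterR : (N:ℝ) * (((t - 2*b - 2 : ℕ) : ℝ) * ((t - b - 2 : ℕ) : ℝ)) ^ 2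
      ≤ ((b:ℝ) + 1) * ((D:ℝ) * ((n:ℝ) * ((b:ℝ) + 2)) ^ 2) := by
    exact_mod_cast master
  set m1 := ((t - 2*b - 2 : ℕ) : ℝ)
  set m2 := ((t - b - 2 : ℕ) : ℝ)
  have hm1p : (0:ℝ) < m1 := lt_of_lt_of_le (by positivity) hm1
  have hm2p : (0:ℝ) < m2 := lt_of_lt_of_le (by positivity) hm2
  have hDr : (0:ℝ) < (D : ℝ) := by exact_mod_cast hD
  have step1 : (N:ℝ) / (D:ℝ) ≤ ((b:ℝ)+1) * ((n:ℝ)*((b:ℝ)+2))^2 / (m1*m2)^2 := by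
    rw [div_le_div_iff₀ hDr (by positivity)]
    calc (N:ℝ) * (m1*m2)^2
        ≤ ((b:ℝ)+1) * ((D:ℝ) * ((n:ℝ)*((b:ℝ)+2))^2) := masterR
      _ = ((b:ℝ)+1)*((n:ℝ)*((b:ℝ)+2))^2 * (D:ℝ) := by ring
  have step2 : ((b:ℝ)+1) * ((n:ℝ)*((b:ℝ)+2))^2 / (m1*m2)^2 ≤ 288 / y := by
    rw [div_le_div_iff₀ (by positivity) hy0]
    have e2 : (n:ℝ)*((b:ℝ)+2) ≤ 3*(n:ℝ)*y := by nlinarith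
    have e4 : (x*y/2)*(x*y/2) ≤ m1*m2 :=
      mul_le_mul hm1 hm2 (by positivity) hm1p.le
    have e3 : (n:ℝ)*y*y/4 ≤ m1*m2 := by
      calc (n:ℝ)*y*y/4 = (x*y/2)*(x*y/2) := by rw [← hxx]; ring
        _ ≤ m1*m2 := e4
    have hb1 : ((b:ℝ)+1) ≤ 2*y := by linarith
    have q1 : ((n:ℝ)*((b:ℝ)+2))^2 ≤ (3*(n:ℝ)*y)^2 :=
      pow_le_pow_left₀ (by positivity) e2 2
    calc ((b:ℝ)+1) * ((n:ℝ)*((b:ℝ)+2))^2 * y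
        ≤ ((2*y) * (3*(n:ℝ)*y)^2) * y :=
          mul_le_mul_of_nonneg_right
            (mul_le_mul hb1 q1 (by positivity) (by positivity)) hy0.le
      _ = 288 * ((n:ℝ)*y*y/4)^2 := by ring
      _ ≤ 288 * (m1*m2)^2 := by
          have h0 : (0:ℝ) ≤ (n:ℝ)*y*y/4 := by positivity
          nlinarith [e3, h0]
  exact step1.trans step2


/-- For `0 < ε < 1/2`, with `t = ⌈n^{1/2+ε}⌉`, the proportion of
configurations of `t` pebbles on `n` vertices with at most `n^ε` birthdays tends to `0`. -/
theorem few_birthdays_proportion_tendsto_zero_eps (ε : ℝ) (hε0 : 0 < ε) (hε : ε < 1 / 2) :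
    Filter.Tendsto (fun n : ℕ =>
      (Nat.card {C : Fin n → ℕ // (∑ i, C i = ⌈(n : ℝ) ^ (1 / 2 + ε)⌉₊) ∧
          ((⌈(n : ℝ) ^ (1 / 2 + ε)⌉₊ - (Finset.univ.filter fun i => 1 ≤ C i).card : ℕ) : ℝ)
            ≤ (n : ℝ) ^ ε} : ℝ) /
        (Nat.choose (n + ⌈(n : ℝ) ^ (1 / 2 + ε)⌉₊ - 1) ⌈(n : ℝ) ^ (1 / 2 + ε)⌉₊ : ℝ))
      Filter.atTop (nhds 0) := by
  have hev8 : ∀ᶠ n : ℕ in Filter.atTop, (8:ℝ) ≤ (n:ℝ) ^ ((1:ℝ)/2) :=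
    ((tendsto_rpow_atTop (by norm_num : (0:ℝ) < 1/2)).comp
      tendsto_natCast_atTop_atTop).eventually_ge_atTop 8
  have hevy : ∀ᶠ n : ℕ in Filter.atTop, (1:ℝ) ≤ (n:ℝ) ^ ε :=
    ((tendsto_rpow_atTop hε0).comp tendsto_natCast_atTop_atTop).eventually_ge_atTop 1
  refine squeeze_zero' (g := fun n : ℕ => 288 * (n:ℝ) ^ (-ε))
    (Filter.Eventually.of_forall fun n => by positivity) ?_ ?_
  case _ =>
    filter_upwards [hev8, hevy, Filter.eventually_ge_atTop 1] with n h8 hy hn1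
    set t := ⌈(n : ℝ) ^ (1 / 2 + ε)⌉₊ with ht
    set b := ⌊(n : ℝ) ^ ε⌋₊ with hb
    clear_value t b
    have hn0 : (0:ℝ) < n := by exact_mod_cast hn1
    have hxy : (n:ℝ) ^ ((1:ℝ)/2 + ε) = (n:ℝ) ^ ((1:ℝ)/2) * (n:ℝ) ^ ε :=
      Real.rpow_add hn0 _ _
    have hxx : (n:ℝ) ^ ((1:ℝ)/2) * (n:ℝ) ^ ((1:ℝ)/2) = (n:ℝ) := by
      rw [← Real.rpow_add hn0]; norm_num
    have hbyr : (b:ℝ) ≤ (n:ℝ) ^ ε := by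
      rw [hb]; exact Nat.floor_le (by positivity)
    have htT : (n:ℝ) ^ ((1:ℝ)/2) * (n:ℝ) ^ ε ≤ (t:ℝ) := by
      rw [ht, ← hxy]; exact Nat.le_ceil _
    -- the master counting inequality
    have hsubN : Nat.card {C : Fin n → ℕ // (∑ i, C i = t) ∧
          ((t - (Finset.univ.filter fun i => 1 ≤ C i).card : ℕ) : ℝ) ≤ (n : ℝ) ^ ε}
        ≤ #((configs n t).filter fun C => t - FB.occ C ≤ b) := by
      rw [← Nat.card_eq_finsetCard]
      refine Nat.card_le_card_of_injective (fun C => ⟨C.1, ?_⟩) ?_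
      · exact mem_filter.2 ⟨FB.mem_configs C.2.1, by rw [hb]; exact Nat.le_floor C.2.2⟩
      · intro C₁ C₂ h
        have hv := congrArg Subtype.val h
        exact Subtype.ext hv
    have master : Nat.card {C : Fin n → ℕ // (∑ i, C i = t) ∧
          ((t - (Finset.univ.filter fun i => 1 ≤ C i).card : ℕ) : ℝ) ≤ (n : ℝ) ^ ε}
          * ((t - 2*b - 2) * (t - b - 2)) ^ 2
        ≤ (b + 1) * ((n + t - 1).choose t * (n * (b + 2)) ^ 2) := by
      refine le_trans (Nat.mul_le_mul_right _ hsubN) ((FB.bad_card_le n t b).trans ?_)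
      gcongr
      exact FB.configs_card_le n t
    have hD : 0 < (n + t - 1).choose t :=
      Nat.choose_pos (Nat.le_pred_of_lt (Nat.lt_add_of_pos_left hn1))
    have hfin := FB_analytic_bound h8 hy hxx hbyr htT hD master
    have hrw : (288:ℝ) / ((n:ℝ) ^ ε) = 288 * (n:ℝ) ^ (-ε) := by
      rw [Real.rpow_neg hn0.le, div_eq_mul_inv]
    exact le_of_le_of_eq hfin hrw
  case _ =>
    have h := ((tendsto_rpow_neg_atTop hε0).comp tendsto_natCast_atTop_atTop).const_mul (288:ℝ)
    simpa using h
end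

section
/- Let K_N be the complete graph on N ≥ 2 vertices, let C be a pebbling configuration on K_N of size t, and let B(C) = t − |{u : C(u) ≥ 1}| be its number of birthdays. If B(C) ≥ 2s for an integer s ≥ 0, then for every vertex v of K_N there is a finite sequence of pebbling moves transforming C into a configuration with at least s pebbles on v. -/
open Finset

section Aux
variable {N : ℕ}

lemma move_sum (C : Fin N → ℕ) (u v : Fin N) (huv : u ≠ v) (hu : 2 ≤ C u) :
    (∑ i, (fun w => if w = u then C u - 2 else if w = v then C v + 1 else C w) i) + 2
      = (∑ i, C i) + 1 := by
  have key : ∀ w : Fin N,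
      (if w = u then C u - 2 else if w = v then C v + 1 else C w)
        + (if w = u then 2 else 0) = C w + (if w = v then 1 else 0) := by
    intro w
    by_cases h1 : w = u
    · subst h1; simp [huv]; omega
    · by_cases h2 : w = v <;> simp [h1, h2, (Ne.symm huv : v ≠ u)]
  calc (∑ i, (fun w => if w = u then C u - 2 else if w = v then C v + 1 else C w) i) + 2
      = ∑ w, ((if w = u then C u - 2 else if w = v then C v + 1 else C w)
          + (if w = u then 2 else 0)) := by
        rw [Finset.sum_add_distrib]; simp
    _ = ∑ w, (C w + (if w = v then 1 else 0)) := by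
        exact Finset.sum_congr rfl fun w _ => key w
    _ = (∑ i, C i) + 1 := by rw [Finset.sum_add_distrib]; simp

lemma move_supp (C : Fin N → ℕ) (u v : Fin N) (huv : u ≠ v) :
    (Finset.univ.filter fun w =>
        1 ≤ (fun w => if w = u then C u - 2 else if w = v then C v + 1 else C w) w)
      ⊆ insert v (Finset.univ.filter fun w => 1 ≤ C w) := by
  intro w hw
  simp only [mem_filter, mem_univ, true_and] at hw
  simp only [mem_insert, mem_filter, mem_univ, true_and]
  by_cases h1 : w = u
  · subst h1; simp [huv] at hw; right; omega
  · by_cases h2 : w = v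
    · left; exact h2
    · simp [h1, h2] at hw; right; exact hw

lemma aux_main (v : Fin N) :
    ∀ t : ℕ, ∀ C : Fin N → ℕ, ∑ i, C i = t → 1 ≤ C v →
    ∀ k : ℕ, k + (Finset.univ.filter fun u => 1 ≤ C u).card ≤ C v + t →
    ∃ C' : Fin N → ℕ, Relation.ReflTransGen (PebblingMove (⊤ : SimpleGraph (Fin N))) C C'
      ∧ k + 1 ≤ 2 * C' v := by
  intro t
  induction t using Nat.strong_induction_on with
  | _ t ih =>
    intro C hsum hv k hk
    by_cases h : ∃ u : Fin N, u ≠ v ∧ 2 ≤ C u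
    · obtain ⟨u, huv, hu2⟩ := h
      set D : Fin N → ℕ :=
        fun w => if w = u then C u - 2 else if w = v then C v + 1 else C w with hD
      have hmove : PebblingMove (⊤ : SimpleGraph (Fin N)) C D :=
        ⟨u, v, by simp [huv], hu2, rfl⟩
      have hsumD : (∑ i, D i) + 2 = t + 1 := by
        rw [hD, move_sum C u v huv hu2, hsum]
      have hDv : D v = C v + 1 := by simp [hD, (Ne.symm huv : v ≠ u)]
      have hsuppD : (Finset.univ.filter fun w => 1 ≤ D w).card
          ≤ (Finset.univ.filter fun w => 1 ≤ C w).card := by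
        apply Finset.card_le_card
        have h1 := move_supp C u v huv
        have h2 : insert v (Finset.univ.filter fun w => 1 ≤ C w)
            = (Finset.univ.filter fun w => 1 ≤ C w) := by
          apply Finset.insert_eq_self.mpr; simp [hv]
        rw [hD]; rw [h2] at h1; exact h1
      have hlt : ∑ i, D i < t := by omega
      obtain ⟨C', hrel, hC'⟩ := ih (∑ i, D i) hlt D rfl (by omega) k (by omega)
      exact ⟨C', Relation.ReflTransGen.head hmove hrel, hC'⟩
    · push_neg at h
      refine ⟨C, Relation.ReflTransGen.refl, ?_⟩
      have hsplit : C v + ∑ i ∈ Finset.univ.erase v, C i = ∑ i, C i :=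
        Finset.add_sum_erase _ C (mem_univ v)
      have hbound : ∑ i ∈ Finset.univ.erase v, C i
          ≤ ((Finset.univ.erase v).filter fun u => 1 ≤ C u).card := by
        calc ∑ i ∈ Finset.univ.erase v, C i
            = ∑ i ∈ (Finset.univ.erase v).filter fun u => 1 ≤ C u, C i := by
              refine (Finset.sum_filter_of_ne ?_).symm
              intro i _ hi; omega
          _ ≤ ∑ i ∈ (Finset.univ.erase v).filter fun u => 1 ≤ C u, 1 := by
              apply Finset.sum_le_sum
              intro i hi
              simp only [mem_filter, mem_erase] at hi
              have := h i hi.1.1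
              omega
          _ = _ := by simp
      have hcard : ((Finset.univ.erase v).filter fun u => 1 ≤ C u).card + 1
          = (Finset.univ.filter fun u => 1 ≤ C u).card := by
        have heq : (Finset.univ.filter fun u => 1 ≤ C u)
            = insert v ((Finset.univ.erase v).filter fun u => 1 ≤ C u) := by
          ext w
          by_cases hw : w = v <;> simp [hw, hv]
        rw [heq, Finset.card_insert_of_notMem (by simp)]
      omega

end Aux

/-- On the complete graph `K_N` (`N ≥ 2`), if a configuration `C` of
size `t` has `B(C) = t - #{u : C u ≥ 1} ≥ 2s` birthdays, then for every vertex `v` some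
sequence of pebbling moves yields at least `s` pebbles on `v`. -/
theorem complete_graph_move_pebbles (N : ℕ) (hN : 2 ≤ N) (C : Fin N → ℕ) (t : ℕ)
    (htot : ∑ i, C i = t) (s : ℕ)
    (hB : 2 * s ≤ t - (Finset.univ.filter fun u => 1 ≤ C u).card) :
    ∀ v : Fin N, ∃ C' : Fin N → ℕ,
      Relation.ReflTransGen (PebblingMove (⊤ : SimpleGraph (Fin N))) C C' ∧ s ≤ C' v := by
  intro v
  have hsupp_le : (Finset.univ.filter fun u => 1 ≤ C u).card ≤ t := by
    calc (Finset.univ.filter fun u => 1 ≤ C u).card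
        = ∑ i ∈ Finset.univ.filter fun u => 1 ≤ C u, 1 := by simp
      _ ≤ ∑ i ∈ Finset.univ.filter fun u => 1 ≤ C u, C i := by
          apply Finset.sum_le_sum; intro i hi
          exact (mem_filter.mp hi).2
      _ ≤ ∑ i, C i := Finset.sum_le_sum_of_subset (Finset.filter_subset _ _)
      _ = t := htot
  have hB' : 2 * s + (Finset.univ.filter fun u => 1 ≤ C u).card ≤ t := by omega
  rcases Nat.eq_zero_or_pos s with hs | hs
  · exact ⟨C, Relation.ReflTransGen.refl, by omega⟩
  by_cases hv : 1 ≤ C v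
  · obtain ⟨C', hrel, hC'⟩ := aux_main v t C htot hv (2 * s + 1) (by omega)
    exact ⟨C', hrel, by omega⟩
  · have hex : ∃ u : Fin N, u ≠ v ∧ 2 ≤ C u := by
      by_contra hc; push_neg at hc
      have hle : ∑ i, C i ≤ (Finset.univ.filter fun u => 1 ≤ C u).card := by
        calc ∑ i, C i = ∑ i ∈ Finset.univ.filter fun u => 1 ≤ C u, C i := by
              refine (Finset.sum_filter_of_ne ?_).symm
              intro i _ hi; omega
          _ ≤ ∑ i ∈ Finset.univ.filter fun u => 1 ≤ C u, 1 := by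
              apply Finset.sum_le_sum; intro i hi
              by_cases hiv : i = v
              · subst hiv; omega
              · have := hc i hiv; omega
          _ = _ := by simp
      omega
    obtain ⟨u, huv, hu2⟩ := hex
    set D : Fin N → ℕ :=
      fun w => if w = u then C u - 2 else if w = v then C v + 1 else C w with hD
    have hmove : PebblingMove (⊤ : SimpleGraph (Fin N)) C D :=
      ⟨u, v, by simp [huv], hu2, rfl⟩
    have hsumD : (∑ i, D i) + 2 = t + 1 := by
      rw [hD, move_sum C u v huv hu2, htot]
    have hDv : D v = C v + 1 := by simp [hD, (Ne.symm huv : v ≠ u)]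
    have hsuppD : (Finset.univ.filter fun w => 1 ≤ D w).card
        ≤ (Finset.univ.filter fun w => 1 ≤ C w).card + 1 := by
      calc (Finset.univ.filter fun w => 1 ≤ D w).card
          ≤ (insert v (Finset.univ.filter fun w => 1 ≤ C w)).card :=
            Finset.card_le_card (by rw [hD]; exact move_supp C u v huv)
        _ ≤ _ := Finset.card_insert_le _ _
    obtain ⟨C', hrel, hC'⟩ := aux_main v (∑ i, D i) D rfl (by omega) (2 * s - 1) (by omega)
    exact ⟨C', Relation.ReflTransGen.head hmove hrel, by omega⟩
end
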